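/- arXiv:math/0407297 — 6 statements merged into one kernel-verified Lean document; each statement's English description precedes it below -/
import Mathlib

section
/- Let θ₀ < θ₁ < θ₀ + 2π be real numbers and let D be a nonempty open convex subset of ℂ with D ⊆ S ∩ U and A ⊆ ∂D (where A is the closed arc of the unit circle over [θ₀, θ₁] and S is the open sector over (θ₀, θ₁)). Then the set D* := D ∪ A° ∪ ι(D) — the union of D, the open arc A°, and the image of D under inversion in the unit circle — is a convex subset of ℂ. -/
open Complex Set Real


private lemma fdecomp (f : ℂ →L[ℝ] ℝ) (z : ℂ) : f z = z.re * f 1 + z.im * f Complex.I := by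
  have h : z = z.re • (1:ℂ) + z.im • Complex.I := by
    simp [Complex.real_smul, Complex.re_add_im]
  calc f z = f (z.re • (1:ℂ) + z.im • Complex.I) := by rw [← h]
  _ = z.re * f 1 + z.im * f Complex.I := by rw [map_add, map_smul, map_smul]; rfl

private lemma fexp (f : ℂ →L[ℝ] ℝ) (θ : ℝ) :
    f (Complex.exp (↑θ * Complex.I)) = Real.cos θ * f 1 + Real.sin θ * f Complex.I := by
  rw [fdecomp f, Complex.exp_ofReal_mul_I_re, Complex.exp_ofReal_mul_I_im]

private lemma fsmul (f : ℂ →L[ℝ] ℝ) (r : ℝ) (z : ℂ) : f (↑r * z) = r * f z := by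
  rw [← Complex.real_smul, map_smul]; rfl

private lemma combo_im (a b : ℝ) (x y w : ℂ) :
    ((a • x + b • y) * w).im = a * (x * w).im + b * (y * w).im := by
  rw [add_mul, smul_mul_assoc, smul_mul_assoc, Complex.add_im, Complex.smul_im,
    Complex.smul_im]
  rfl

private lemma le_on_closure' (f : ℂ →L[ℝ] ℝ) (c : ℝ) (D : Set ℂ)
    (hf : ∀ a ∈ D, f a < c) {z : ℂ} (hz : z ∈ closure D) : f z ≤ c := by
  have h : closure D ⊆ f ⁻¹' Iic c :=
    closure_minimal (fun a ha => (hf a ha).le) (isClosed_Iic.preimage f.continuous)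
  exact h hz

private lemma normSq_combo (a b : ℝ) (ha : 0 ≤ a) (hb : 0 ≤ b) (hab : a + b = 1) (x y : ℂ) :
    Complex.normSq (a • x + b • y) ≤ a * Complex.normSq x + b * Complex.normSq y := by
  have h1 : ‖a • x + b • y‖ ≤ a * ‖x‖ + b * ‖y‖ := by
    calc ‖a • x + b • y‖ ≤ ‖a • x‖ + ‖b • y‖ :=
          norm_add_le _ _
    _ = a * ‖x‖ + b * ‖y‖ := by
          rw [Complex.real_smul, Complex.real_smul, norm_mul, norm_mul,
            Complex.norm_real, Complex.norm_real, Real.norm_eq_abs, Real.norm_eq_abs, _root_.abs_of_nonneg ha,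
            _root_.abs_of_nonneg hb]
  have h0 : (0:ℝ) ≤ ‖a • x + b • y‖ := norm_nonneg _
  rw [← Complex.sq_norm, ← Complex.sq_norm x, ← Complex.sq_norm y]
  have h2 : ‖a • x + b • y‖ ^ 2 ≤
      (a * ‖x‖ + b * ‖y‖) ^ 2 := by nlinarith [h0, h1]
  nlinarith [h2, mul_nonneg (mul_nonneg ha hb) (sq_nonneg (‖x‖ - ‖y‖))]

private lemma inv_conj_rep (r θ : ℝ) :
    ((starRingEnd ℂ) (↑r * Complex.exp (↑θ*Complex.I)))⁻¹ = ↑r⁻¹ * Complex.exp (↑θ*Complex.I) := by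
  rw [map_mul, Complex.conj_ofReal, ← Complex.exp_conj]
  have h : (starRingEnd ℂ) (↑θ*Complex.I) = -(↑θ*Complex.I) := by
    simp [Complex.conj_ofReal]
  rw [h, Complex.exp_neg, mul_inv, inv_inv, Complex.ofReal_inv]

private lemma abs_rep (r θ : ℝ) (hr : 0 ≤ r) :
    ‖(↑r * Complex.exp (↑θ*Complex.I))‖ = r := by
  rw [norm_mul, Complex.norm_real, Real.norm_eq_abs, Complex.norm_exp_ofReal_mul_I, mul_one, _root_.abs_of_nonneg hr]

private lemma prod_exp (r θ φ : ℝ) :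
    (↑r * Complex.exp (↑θ*Complex.I)) * Complex.exp (↑φ*Complex.I)
      = ↑r * Complex.exp (↑(θ+φ)*Complex.I) := by
  rw [mul_assoc, ← Complex.exp_add]
  push_cast; ring_nf

private lemma im_rep (r θ : ℝ) : (↑r * Complex.exp (↑θ*Complex.I)).im = r * Real.sin θ := by
  simp [Complex.exp_ofReal_mul_I_im]

private lemma S_forward (θ₀ θ₁ : ℝ) (hθ : θ₀ < θ₁) (hπ : θ₁ ≤ θ₀ + π) {z : ℂ}
    (hz : ∃ r θ : ℝ, 0 < r ∧ θ₀ < θ ∧ θ < θ₁ ∧ z = ↑r * Complex.exp (↑θ*Complex.I)) :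
    0 < (z * Complex.exp (↑(-θ₀)*Complex.I)).im ∧ (z * Complex.exp (↑(-θ₁)*Complex.I)).im < 0 := by
  obtain ⟨r, θ, hr, h1, h2, rfl⟩ := hz
  rw [prod_exp, prod_exp, im_rep, im_rep]
  constructor
  · exact mul_pos hr (Real.sin_pos_of_pos_of_lt_pi (by linarith) (by linarith))
  · have : 0 < Real.sin (θ₁ - θ) := Real.sin_pos_of_pos_of_lt_pi (by linarith) (by linarith)
    have h3 : Real.sin (θ + -θ₁) = -Real.sin (θ₁ - θ) := by
      rw [← Real.sin_neg]; ring_nf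
    rw [h3]
    nlinarith

private lemma S_backward (θ₀ θ₁ : ℝ) (hθ : θ₀ < θ₁) (hπ : θ₁ ≤ θ₀ + π) {z : ℂ}
    (h1 : 0 < (z * Complex.exp (↑(-θ₀)*Complex.I)).im)
    (h2 : (z * Complex.exp (↑(-θ₁)*Complex.I)).im < 0) :
    ∃ r θ : ℝ, 0 < r ∧ θ₀ < θ ∧ θ < θ₁ ∧ z = ↑r * Complex.exp (↑θ*Complex.I) := by
  set u := z * Complex.exp (↑(-θ₀)*Complex.I) with hu
  have hune : u ≠ 0 := by
    intro h; rw [h] at h1; simp at h1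
  set β := u.arg with hβ
  have habs : (0:ℝ) < ‖u‖ := by simpa [norm_pos_iff] using norm_pos_iff.mpr hune
  have hsinβ : 0 < Real.sin β := by
    rw [Complex.sin_arg]; exact div_pos h1 habs
  have hβπ : β ≤ π := Complex.arg_le_pi u
  have hβπ' : -π < β := Complex.neg_pi_lt_arg u
  have hβlt : β < π := by
    rcases lt_or_eq_of_le hβπ with h | h
    · exact h
    · rw [h] at hsinβ; simp at hsinβ
  have hβpos : 0 < β := by
    by_contra h
    push_neg at h
    have : Real.sin (-β) ≥ 0 :=
      Real.sin_nonneg_of_nonneg_of_le_pi (by linarith) (by linarith)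
    rw [Real.sin_neg] at this
    linarith
  have hz : z = ↑(‖u‖) * Complex.exp (↑(θ₀ + β)*Complex.I) := by
    have h3 : (↑(‖u‖) : ℂ) * Complex.exp (↑β*Complex.I) = u :=
      Complex.norm_mul_exp_arg_mul_I u
    have h4 : u * Complex.exp (↑θ₀*Complex.I) = z := by
      rw [hu, mul_assoc, ← Complex.exp_add]
      norm_num
    rw [← h4]
    nth_rewrite 1 [← h3]
    rw [prod_exp, add_comm β θ₀]
  refine ⟨‖u‖, θ₀ + β, habs, by linarith, ?_, hz⟩
  -- θ₀ + β < θ₁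
  by_contra h
  push_neg at h
  rw [hz, prod_exp, im_rep] at h2
  have hs : 0 ≤ Real.sin (θ₀ + β + -θ₁) :=
    Real.sin_nonneg_of_nonneg_of_le_pi (by linarith) (by linarith)
  nlinarith
private lemma arc_strict (θ₀ θ₁ : ℝ) (hθ : θ₀ < θ₁) (hπ : θ₁ ≤ θ₀ + π)
    (f : ℂ →L[ℝ] ℝ) (c : ℝ) (hc : c ≤ 0)
    (harc : ∀ θ : ℝ, θ₀ ≤ θ → θ ≤ θ₁ → f (Complex.exp (↑θ*Complex.I)) ≤ c)
    (d : ℂ) (hd : f d < c) {μ : ℝ} (hμ0 : θ₀ < μ) (hμ1 : μ < θ₁) :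
    f (Complex.exp (↑μ*Complex.I)) < c := by
  rcases (harc μ hμ0.le hμ1.le).lt_or_eq with h | h
  · exact h
  exfalso
  set ε := min (μ - θ₀) (θ₁ - μ) with hε
  have hε0 : 0 < ε := lt_min (by linarith) (by linarith)
  have hεa : ε ≤ μ - θ₀ := min_le_left _ _
  have hεb : ε ≤ θ₁ - μ := min_le_right _ _
  have hπ0 : (0:ℝ) < π := Real.pi_pos
  have hε2 : ε ≤ π/2 := by linarith
  have hp1 := harc (μ + ε) (by linarith) (by linarith)
  have hm1 := harc (μ - ε) (by linarith) (by linarith)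
  have key : f (Complex.exp (↑(μ+ε)*Complex.I)) + f (Complex.exp (↑(μ-ε)*Complex.I))
      = 2 * Real.cos ε * f (Complex.exp (↑μ*Complex.I)) := by
    rw [fexp, fexp, fexp, Real.cos_add, Real.cos_sub, Real.sin_add, Real.sin_sub]
    ring
  have hcos1 : Real.cos ε < 1 := by
    rcases (Real.cos_le_one ε).lt_or_eq with h' | h'
    · exact h'
    · exfalso
      have := (Real.cos_eq_one_iff_of_lt_of_lt (by linarith) (by linarith)).mp h'
      linarith
  rcases hc.lt_or_eq with hclt | hceq
  · rw [h] at key; nlinarith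
  · -- c = 0
    rw [hceq] at h hp1 hm1 hd
    rw [h] at key
    have hfp : f (Complex.exp (↑(μ+ε)*Complex.I)) = 0 := by linarith
    have e1 : Real.cos μ * f 1 + Real.sin μ * f Complex.I = 0 := by rw [← fexp, h]
    have e2 : Real.cos (μ+ε) * f 1 + Real.sin (μ+ε) * f Complex.I = 0 := by rw [← fexp, hfp]
    have hsin : 0 < Real.sin ε := Real.sin_pos_of_pos_of_lt_pi hε0 (by linarith)
    rw [Real.cos_add, Real.sin_add] at e2
    have hQ : Real.sin ε * (Real.cos μ * f Complex.I - Real.sin μ * f 1) = 0 := by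
      linear_combination e2 - Real.cos ε * e1
    have hQ0 : Real.cos μ * f Complex.I - Real.sin μ * f 1 = 0 := by
      rcases mul_eq_zero.mp hQ with h' | h'
      · exact absurd h' (ne_of_gt hsin)
      · exact h'
    have pyth := Real.sin_sq_add_cos_sq μ
    have hA : f 1 = 0 := by linear_combination Real.cos μ * e1 - Real.sin μ * hQ0 - f 1 * pyth
    have hB : f Complex.I = 0 := by linear_combination Real.sin μ * e1 + Real.cos μ * hQ0 - f Complex.I * pyth
    rw [fdecomp, hA, hB] at hd
    simp at hd

private lemma theta_bound (θ₀ θ₁ : ℝ) (hθ : θ₀ < θ₁) (hθ' : θ₁ < θ₀ + 2*π)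
    (D : Set ℂ) (hne : D.Nonempty) (hopen : IsOpen D) (hconv : Convex ℝ D)
    (h0D : (0:ℂ) ∉ D)
    (hcl : ∀ θ : ℝ, θ₀ ≤ θ → θ ≤ θ₁ → Complex.exp (↑θ*Complex.I) ∈ closure D) :
    θ₁ ≤ θ₀ + π := by
  by_contra hlt
  push_neg at hlt
  obtain ⟨f, hf⟩ := geometric_hahn_banach_open_point hconv hopen h0D
  rw [map_zero] at hf
  have harc : ∀ θ : ℝ, θ₀ ≤ θ → θ ≤ θ₁ → f (Complex.exp (↑θ*Complex.I)) ≤ 0 :=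
    fun θ h0 h1 => le_on_closure' f 0 D hf (hcl θ h0 h1)
  set ζ : ℂ := Complex.mk (f 1) (f Complex.I) with hζdef
  have hπ0 : (0:ℝ) < π := Real.pi_pos
  by_cases hζ : ζ = 0
  · have hA : f 1 = 0 := by
      have := congrArg Complex.re hζ; simpa [hζdef] using this
    have hB : f Complex.I = 0 := by
      have := congrArg Complex.im hζ; simpa [hζdef] using this
    obtain ⟨d, hd⟩ := hne
    have := hf d hd
    rw [fdecomp, hA, hB] at this
    simp at this
  · set τ := ζ.arg with hτ
    have habs : (0:ℝ) < ‖ζ‖ := by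
      simpa [norm_pos_iff] using norm_pos_iff.mpr hζ
    have gval : ∀ θ : ℝ, f (Complex.exp (↑θ*Complex.I)) = ‖ζ‖ * Real.cos (θ - τ) := by
      intro θ
      have hre : ‖ζ‖ * Real.cos τ = f 1 := by
        rw [hτ, Complex.cos_arg hζ]
        field_simp
        rfl
      have him : ‖ζ‖ * Real.sin τ = f Complex.I := by
        rw [hτ, Complex.sin_arg]
        field_simp
        rfl
      rw [fexp, Real.cos_sub, ← hre, ← him]
      ring
    set k : ℤ := ⌈(θ₀ - τ)/(2*π)⌉ with hk
    have h2π : (0:ℝ) < 2*π := by linarith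
    have hk1 : (θ₀ - τ)/(2*π) ≤ (k:ℝ) := Int.le_ceil _
    have hk2 : (k:ℝ) < (θ₀ - τ)/(2*π) + 1 := Int.ceil_lt_add_one _
    have hts1 : θ₀ ≤ τ + k*(2*π) := by
      rw [div_le_iff₀ h2π] at hk1; linarith
    have hts2 : τ + k*(2*π) < θ₀ + 2*π := by
      rw [← sub_lt_iff_lt_add'] at hk2
      have : ((k:ℝ) - 1) * (2*π) < θ₀ - τ := by
        calc ((k:ℝ) - 1) * (2*π) < ((θ₀ - τ)/(2*π)) * (2*π) := by
              apply mul_lt_mul_of_pos_right _ h2π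
              linarith
        _ = θ₀ - τ := by field_simp
      nlinarith
    rcases le_or_gt (τ + k*(2*π)) θ₁ with hle | hgt
    · have h := harc _ hts1 hle
      rw [gval] at h
      have : τ + k*(2*π) - τ = (k:ℝ)*(2*π) := by ring
      rw [this, Real.cos_int_mul_two_pi] at h
      nlinarith
    · set g₁ := θ₀ + 2*π - (τ + k*(2*π)) with hg1
      set g₂ := τ + k*(2*π) - θ₁ with hg2
      have hg1p : 0 < g₁ := by simp [hg1]; linarith
      have hg2p : 0 < g₂ := by simp [hg2]; linarith
      have hsum : g₁ + g₂ < π := by simp [hg1, hg2]; linarith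
      rcases le_or_gt g₂ g₁ with hcase | hcase
      · have h := harc θ₁ (by linarith) le_rfl
        rw [gval] at h
        have heq : θ₁ - τ = (k:ℝ)*(2*π) - g₂ := by simp [hg2]; ring
        rw [heq, Real.cos_int_mul_two_pi_sub] at h
        have : 0 < Real.cos g₂ := Real.cos_pos_of_mem_Ioo ⟨by linarith, by linarith⟩
        nlinarith
      · have h := harc θ₀ le_rfl (by linarith)
        rw [gval] at h
        have heq : θ₀ - τ = g₁ + ((k:ℝ) - 1)*(2*π) := by simp [hg1]; ring
        have heq2 : g₁ + ((k:ℝ) - 1)*(2*π) = g₁ + ((k - 1 : ℤ):ℝ)*(2*π) := by push_cast; ring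
        rw [heq, heq2, Real.cos_add_int_mul_two_pi] at h
        have : 0 < Real.cos g₁ := Real.cos_pos_of_mem_Ioo ⟨by linarith, by linarith⟩
        nlinarith

private lemma mem_bound (θ₀ θ₁ : ℝ) (hθ : θ₀ < θ₁) (hπ : θ₁ ≤ θ₀ + π)
    (D : Set ℂ)
    (hsub : D ⊆
      {z : ℂ | ∃ r θ : ℝ, 0 < r ∧ θ₀ < θ ∧ θ < θ₁ ∧ z = r * Complex.exp (θ * Complex.I)} ∩
      {z : ℂ | ‖z‖ < 1})
    (f : ℂ →L[ℝ] ℝ) (c : ℝ) (hc : c ≤ 0)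
    (hfD : ∀ a ∈ D, f a < c)
    (harc : ∀ θ : ℝ, θ₀ ≤ θ → θ ≤ θ₁ → f (Complex.exp (↑θ*Complex.I)) ≤ c)
    (d₀ : ℂ) (hd₀ : d₀ ∈ D)
    {u : ℂ}
    (hu : u ∈ D ∪ {z : ℂ | ∃ θ : ℝ, θ₀ < θ ∧ θ < θ₁ ∧ z = Complex.exp (θ * Complex.I)} ∪
      (fun z : ℂ => (starRingEnd ℂ z)⁻¹) '' D) :
    ∃ m : ℝ, f u < c*m ∧ 1 ≤ m ∧ Complex.normSq u ≤ m := by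
  rcases hu with (hu | hu) | hu
  · refine ⟨1, by simpa using hfD u hu, le_rfl, ?_⟩
    have h : ‖u‖ < 1 := (hsub hu).2
    rw [← Complex.sq_norm]
    nlinarith [norm_nonneg u]
  · obtain ⟨θ, h1, h2, rfl⟩ := hu
    refine ⟨1, ?_, le_rfl, ?_⟩
    · simpa using arc_strict θ₀ θ₁ hθ hπ f c hc harc d₀ (hfD d₀ hd₀) h1 h2
    · rw [← Complex.sq_norm, Complex.norm_exp_ofReal_mul_I]
      norm_num
  · obtain ⟨d, hd, rfl⟩ := hu
    obtain ⟨⟨r, θ, hr, h1, h2, hdeq⟩, habs⟩ := hsub hd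
    subst hdeq
    have hrabs : ‖((r:ℂ) * Complex.exp (↑θ*Complex.I))‖ = r := abs_rep r θ hr.le
    have habs' : r < 1 := by
      have h' : ‖((r:ℂ) * Complex.exp (↑θ*Complex.I))‖ < 1 := habs
      rwa [hrabs] at h'
    have hfd := hfD _ hd
    rw [fsmul] at hfd
    have hpos : (0:ℝ) < r⁻¹^2 := by positivity
    simp only [inv_conj_rep]
    refine ⟨r⁻¹^2, ?_, ?_, ?_⟩
    · calc f ((r⁻¹:ℝ) * Complex.exp (↑θ*Complex.I))
          = r⁻¹^2 * (r * f (Complex.exp (↑θ*Complex.I))) := by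
            rw [fsmul]; field_simp
      _ < r⁻¹^2 * c := mul_lt_mul_of_pos_left hfd hpos
      _ = c * r⁻¹^2 := mul_comm _ _
    · have h3 : 1 < r⁻¹ := (one_lt_inv₀ hr).mpr habs'
      nlinarith
    · rw [← Complex.sq_norm, abs_rep _ _ (by positivity)]

/-- If `D` is a nonempty open convex subset of `ℂ` contained in the
open sector `S` over `(θ₀, θ₁)` intersected with the open unit disk `U`, and the
closed arc `A` of the unit circle over `[θ₀, θ₁]` is contained in the frontier
of `D`, then `D ∪ A° ∪ ι(D)` is convex, where `A°` is the open arc and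
`ι(z) = 1/conj(z)` is inversion in the unit circle. -/
theorem stmt_0 (θ₀ θ₁ : ℝ) (hθ : θ₀ < θ₁) (hθ' : θ₁ < θ₀ + 2 * π)
    (D : Set ℂ) (hne : D.Nonempty) (hopen : IsOpen D) (hconv : Convex ℝ D)
    (hsub : D ⊆
      {z : ℂ | ∃ r θ : ℝ, 0 < r ∧ θ₀ < θ ∧ θ < θ₁ ∧ z = r * Complex.exp (θ * Complex.I)} ∩
      {z : ℂ | ‖z‖ < 1})
    (hA : {z : ℂ | ∃ θ : ℝ, θ₀ ≤ θ ∧ θ ≤ θ₁ ∧ z = Complex.exp (θ * Complex.I)} ⊆ frontier D) :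
    Convex ℝ (D ∪ {z : ℂ | ∃ θ : ℝ, θ₀ < θ ∧ θ < θ₁ ∧ z = Complex.exp (θ * Complex.I)} ∪
      (fun z : ℂ => (starRingEnd ℂ z)⁻¹) '' D) := by
  classical
  obtain ⟨d₀, hd₀⟩ := hne
  have hπ0 : (0:ℝ) < π := Real.pi_pos
  have hcl : ∀ θ : ℝ, θ₀ ≤ θ → θ ≤ θ₁ → Complex.exp (↑θ*Complex.I) ∈ closure D :=
    fun θ h0 h1 => frontier_subset_closure (hA ⟨θ, h0, h1, rfl⟩)
  have h0D : (0:ℂ) ∉ D := by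
    intro h
    obtain ⟨r, θ, hr, _, _, h0⟩ := (hsub h).1
    have h1 := congrArg (‖·‖) h0
    rw [norm_zero, abs_rep r θ hr.le] at h1
    exact absurd h1.symm (ne_of_gt hr)
  have hπ : θ₁ ≤ θ₀ + π := theta_bound θ₀ θ₁ hθ hθ' D ⟨d₀, hd₀⟩ hopen hconv h0D hcl
  have hmemS : ∀ u ∈ (D ∪ {z : ℂ | ∃ θ : ℝ, θ₀ < θ ∧ θ < θ₁ ∧ z = Complex.exp (θ * Complex.I)} ∪
      (fun z : ℂ => (starRingEnd ℂ z)⁻¹) '' D),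
      ∃ r θ : ℝ, 0 < r ∧ θ₀ < θ ∧ θ < θ₁ ∧ u = ↑r * Complex.exp (↑θ*Complex.I) := by
    rintro u ((hu | hu) | hu)
    · exact (hsub hu).1
    · obtain ⟨θ, h1, h2, rfl⟩ := hu
      exact ⟨1, θ, one_pos, h1, h2, by norm_num⟩
    · obtain ⟨d, hd, rfl⟩ := hu
      obtain ⟨⟨r, θ, hr, h1, h2, hdeq⟩, _⟩ := hsub hd
      subst hdeq
      refine ⟨r⁻¹, θ, by positivity, h1, h2, ?_⟩
      simp only [inv_conj_rep]
  rw [convex_iff_forall_pos]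
  rintro x hx y hy a b ha hb hab
  obtain ⟨rx, θx, hrx, hx1, hx2, hxeq⟩ := hmemS x hx
  obtain ⟨ry, θy, hry, hy1, hy2, hyeq⟩ := hmemS y hy
  have hSx := S_forward θ₀ θ₁ hθ hπ ⟨rx, θx, hrx, hx1, hx2, hxeq⟩
  have hSy := S_forward θ₀ θ₁ hθ hπ ⟨ry, θy, hry, hy1, hy2, hyeq⟩
  have hvS : ∃ r θ : ℝ, 0 < r ∧ θ₀ < θ ∧ θ < θ₁ ∧
      a•x+b•y = ↑r * Complex.exp (↑θ*Complex.I) := by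
    apply S_backward θ₀ θ₁ hθ hπ
    · rw [combo_im]
      exact add_pos (mul_pos ha hSx.1) (mul_pos hb hSy.1)
    · rw [combo_im]
      nlinarith [mul_pos ha (neg_pos.mpr hSx.2), mul_pos hb (neg_pos.mpr hSy.2)]
  obtain ⟨rv, χ, hrv, hχ1, hχ2, hveq⟩ := hvS
  have hrvabs : ‖a•x+b•y‖ = rv := by rw [hveq, abs_rep _ _ hrv.le]
  have hfv_eq : ∀ f : ℂ →L[ℝ] ℝ, f (a•x+b•y) = a * f x + b * f y := by
    intro f; rw [map_add, map_smul, map_smul]; rfl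
  rcases lt_trichotomy rv 1 with hv1 | hv1 | hv1
  · -- inside the disk : v ∈ D
    left; left
    by_contra hvD
    obtain ⟨f, hf⟩ := geometric_hahn_banach_open_point hconv hopen hvD
    set c := f (a•x+b•y) with hc
    have harc : ∀ θ : ℝ, θ₀ ≤ θ → θ ≤ θ₁ → f (Complex.exp (↑θ*Complex.I)) ≤ c :=
      fun θ p q => le_on_closure' f c D hf (hcl θ p q)
    have hχarc := harc χ hχ1.le hχ2.le
    have hfvχ : c = rv * f (Complex.exp (↑χ*Complex.I)) := by rw [hc, hveq, fsmul]
    rcases le_or_gt c 0 with hcle | hcpos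
    · obtain ⟨mx, hmx1, hmx2, hmx3⟩ :=
        mem_bound θ₀ θ₁ hθ hπ D hsub f c hcle hf harc d₀ hd₀ hx
      obtain ⟨my, hmy1, hmy2, hmy3⟩ :=
        mem_bound θ₀ θ₁ hθ hπ D hsub f c hcle hf harc d₀ hd₀ hy
      have hcomb : c = a * f x + b * f y := hfv_eq f
      have hlt : a * f x + b * f y < a*(c*mx) + b*(c*my) :=
        add_lt_add (mul_lt_mul_of_pos_left hmx1 ha) (mul_lt_mul_of_pos_left hmy1 hb)
      have h2 : a*(c*mx) + b*(c*my) = c * (a*mx + b*my) := by ring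
      have h3 : c * (a*mx+b*my) ≤ c * 1 := by
        apply mul_le_mul_of_nonpos_left _ hcle
        nlinarith
      rw [mul_one] at h3
      linarith only [hcomb, hlt, h2, h3]
    · have h4 : rv * f (Complex.exp (↑χ*Complex.I)) ≤ rv * c :=
        mul_le_mul_of_nonneg_left hχarc hrv.le
      have h5 : rv * c < 1 * c := mul_lt_mul_of_pos_right hv1 hcpos
      rw [one_mul] at h5
      linarith only [hfvχ, h4, h5]
  · -- on the circle : v ∈ open arc
    left; right
    refine ⟨χ, hχ1, hχ2, ?_⟩
    rw [hveq, hv1]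
    norm_num
  · -- outside the disk : v ∈ inversion image of D
    right
    have hvne : (a•x+b•y) ≠ 0 := by
      intro h
      rw [h, norm_zero] at hrvabs
      linarith
    refine ⟨((starRingEnd ℂ) (a•x+b•y))⁻¹, ?_, ?_⟩
    · -- the inverted point lies in D
      by_contra hwD
      have hweq : ((starRingEnd ℂ) (a•x+b•y))⁻¹ = ↑rv⁻¹ * Complex.exp (↑χ*Complex.I) := by
        rw [hveq, inv_conj_rep]
      obtain ⟨f, hf⟩ := geometric_hahn_banach_open_point hconv hopen hwD
      set c := f (((starRingEnd ℂ) (a•x+b•y))⁻¹) with hc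
      have harc : ∀ θ : ℝ, θ₀ ≤ θ → θ ≤ θ₁ → f (Complex.exp (↑θ*Complex.I)) ≤ c :=
        fun θ p q => le_on_closure' f c D hf (hcl θ p q)
      have hχarc := harc χ hχ1.le hχ2.le
      have hfw : c = rv⁻¹ * f (Complex.exp (↑χ*Complex.I)) := by rw [hc, hweq, fsmul]
      have hfv : f (a•x+b•y) = rv * f (Complex.exp (↑χ*Complex.I)) := by rw [hveq, fsmul]
      rcases le_or_gt c 0 with hcle | hcpos
      · obtain ⟨mx, hmx1, hmx2, hmx3⟩ :=
          mem_bound θ₀ θ₁ hθ hπ D hsub f c hcle hf harc d₀ hd₀ hx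
        obtain ⟨my, hmy1, hmy2, hmy3⟩ :=
          mem_bound θ₀ θ₁ hθ hπ D hsub f c hcle hf harc d₀ hd₀ hy
        have hcomb : f (a•x+b•y) = a * f x + b * f y := hfv_eq f
        have hlt : a * f x + b * f y < a*(c*mx) + b*(c*my) :=
          add_lt_add (mul_lt_mul_of_pos_left hmx1 ha) (mul_lt_mul_of_pos_left hmy1 hb)
        have h2 : a*(c*mx) + b*(c*my) = c * (a*mx + b*my) := by ring
        have hns : Complex.normSq (a•x+b•y) ≤ a*mx + b*my := by
          have h5 := normSq_combo a b ha.le hb.le hab x y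
          linarith only [h5, mul_le_mul_of_nonneg_left hmx3 ha.le,
            mul_le_mul_of_nonneg_left hmy3 hb.le]
        have h3 : c * (a*mx+b*my) ≤ c * Complex.normSq (a•x+b•y) :=
          mul_le_mul_of_nonpos_left hns hcle
        have hnsv : Complex.normSq (a•x+b•y) = rv^2 := by
          rw [← Complex.sq_norm, hrvabs]
        have h6 : c * rv^2 = rv * f (Complex.exp (↑χ*Complex.I)) := by
          rw [hfw]
          field_simp
        rw [hnsv, h6, ← hfv] at h3
        linarith only [hcomb, hlt, h2, h3]
      · have h7 : rv⁻¹ * f (Complex.exp (↑χ*Complex.I)) ≤ rv⁻¹ * c :=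
          mul_le_mul_of_nonneg_left hχarc (by positivity)
        have h8 : rv⁻¹ < 1 := by
          rw [inv_lt_one_iff₀]
          right; exact hv1
        have h9 : rv⁻¹ * c < 1 * c := mul_lt_mul_of_pos_right h8 hcpos
        rw [one_mul] at h9
        linarith only [hfw, h7, h9]
    · -- inversion is an involution
      simp only [map_inv₀, Complex.conj_conj, inv_inv]
end

section
/- Let θ₀ < θ₁ < θ₀ + 2π be real numbers and let D be a nonempty open convex subset of ℂ with D ⊆ S ∩ U and A ⊆ ∂D. Write D_s = ι(D) and D* = D ∪ A° ∪ D_s. Then D* is convex if and only if the following holds: for every w₁ ∈ D_s and every w₂ ∈ A° ∪ D_s such that the closed line segment [w₁, w₂] intersects the open arc A° in a set that is either empty or equal to {w₂}, one has [w₁, w₂] ⊆ D*. -/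
open Complex Set Real


private lemma f_one_I (f : ℂ →L[ℝ] ℝ) (z : ℂ) : f z = z.re * f 1 + z.im * f I := by
  have h : z = z.re • (1:ℂ) + z.im • I := by
    simp [Complex.real_smul, Complex.re_add_im]
  conv_lhs => rw [h]
  rw [map_add, map_smul, map_smul, smul_eq_mul, smul_eq_mul]

private lemma f_exp (f : ℂ →L[ℝ] ℝ) (θ : ℝ) :
    f (Complex.exp (θ * I)) = Real.cos θ * f 1 + Real.sin θ * f I := by
  rw [f_one_I, Complex.exp_ofReal_mul_I_re, Complex.exp_ofReal_mul_I_im]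

private lemma hb_lemma {D : Set ℂ} (hopen : IsOpen D) (hconv : Convex ℝ D) {z : ℂ}
    (hz : z ∉ D) : ∃ f : ℂ →L[ℝ] ℝ, (∀ a ∈ D, f a < f z) ∧ ∀ a ∈ closure D, f a ≤ f z := by
  obtain ⟨f, hf⟩ := geometric_hahn_banach_open_point hconv hopen hz
  refine ⟨f, hf, ?_⟩
  have : closure D ⊆ {w | f w ≤ f z} :=
    closure_minimal (fun a ha => (hf a ha).le) (isClosed_le f.continuous continuous_const)
  exact fun a ha => this ha

private lemma combo_param (x y : ℂ) (a b s t : ℝ) (hab : a + b = 1) :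
    a • (x + s • (y - x)) + b • (x + t • (y - x)) = x + (a * s + b * t) • (y - x) := by
  have hab' : (a : ℂ) + b = 1 := by exact_mod_cast hab
  simp only [Complex.real_smul]
  push_cast
  linear_combination x * hab'

private lemma flip_param (x y : ℂ) (u : ℝ) : y + u • (x - y) = x + (1 - u) • (y - x) := by
  simp only [Complex.real_smul]
  push_cast
  ring

private lemma mem_seg_param (x y : ℂ) {a b u : ℝ} (hau : a ≤ u) (hub : u ≤ b) :
    x + u • (y - x) ∈ segment ℝ (x + a • (y - x)) (x + b • (y - x)) := by
  rcases eq_or_lt_of_le (hau.trans hub) with h | h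
  · have h1 : u = a := le_antisymm (h ▸ hub) hau
    subst h1; rw [← h]; exact left_mem_segment ℝ _ _
  · have hba : b - a ≠ 0 := by linarith
    refine ⟨(b - u) / (b - a), (u - a) / (b - a), div_nonneg (by linarith) (by linarith),
      div_nonneg (by linarith) (by linarith), by field_simp; ring, ?_⟩
    rw [combo_param _ _ _ _ _ _ (by field_simp; ring)]
    congr 2
    field_simp
    ring

private lemma seg_param_mem {x y : ℂ} {a b : ℝ} (hab : a ≤ b) {w : ℂ}
    (hw : w ∈ segment ℝ (x + a • (y - x)) (x + b • (y - x))) :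
    ∃ u, a ≤ u ∧ u ≤ b ∧ w = x + u • (y - x) := by
  obtain ⟨c, d, hc, hd, hcd, rfl⟩ := hw
  have k1 : c * a + d * b = a + d * (b - a) := by linear_combination a * hcd
  have k2 : c * a + d * b = b - c * (b - a) := by linear_combination b * hcd
  refine ⟨c * a + d * b, ?_, ?_, ?_⟩
  · nlinarith [mul_nonneg hd (sub_nonneg.2 hab)]
  · nlinarith [mul_nonneg hc (sub_nonneg.2 hab)]
  · rw [combo_param _ _ _ _ _ _ hcd]

private lemma seg_param_mem01 {x y w : ℂ} (hw : w ∈ segment ℝ x y) :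
    ∃ t : ℝ, 0 ≤ t ∧ t ≤ 1 ∧ w = x + t • (y - x) := by
  obtain ⟨c, d, hc, hd, hcd, rfl⟩ := hw
  have hcd' : (c:ℂ) + d = 1 := by exact_mod_cast hcd
  exact ⟨d, hd, by linarith, by simp only [Complex.real_smul]; linear_combination x * hcd'⟩

private lemma seg_param_mem2 (x y : ℂ) {p q w : ℂ} {a b : ℝ} (hab : a ≤ b)
    (hp : p = x + a • (y - x)) (hq : q = x + b • (y - x)) (hw : w ∈ segment ℝ p q) :
    ∃ u : ℝ, a ≤ u ∧ u ≤ b ∧ w = x + u • (y - x) := by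
  obtain ⟨t, ht0, ht1, rfl⟩ := seg_param_mem01 hw
  refine ⟨a + t * (b - a), by nlinarith, by nlinarith, ?_⟩
  simp only [hp, hq, Complex.real_smul]
  push_cast
  ring
private lemma halfpi (θ₀ θ₁ : ℝ) (hθ : θ₀ < θ₁) (hθ' : θ₁ < θ₀ + 2 * π)
    (D : Set ℂ) (hne : D.Nonempty) (hopen : IsOpen D) (hconv : Convex ℝ D)
    (hsub : D ⊆
      {z : ℂ | ∃ r θ : ℝ, 0 < r ∧ θ₀ < θ ∧ θ < θ₁ ∧ z = r * Complex.exp (θ * Complex.I)} ∩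
      {z : ℂ | ‖z‖ < 1})
    (hA : {z : ℂ | ∃ θ : ℝ, θ₀ ≤ θ ∧ θ ≤ θ₁ ∧ z = Complex.exp (θ * Complex.I)} ⊆ frontier D) :
    θ₁ ≤ θ₀ + π := by
  by_contra hcon
  push_neg at hcon
  have h0D : (0:ℂ) ∉ D := by
    intro h0
    obtain ⟨⟨r, θ, hr, -, -, heq⟩, -⟩ := hsub h0
    have h := congrArg (‖·‖) heq
    simp [Complex.norm_exp_ofReal_mul_I, Complex.norm_real, abs_of_pos hr] at h
    exact hr.ne' h.symm
  obtain ⟨f, hfD, hfcl⟩ := hb_lemma hopen hconv h0D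
  rw [map_zero] at hfD hfcl
  have hAcl : ∀ θ : ℝ, θ₀ ≤ θ → θ ≤ θ₁ → Real.cos θ * f 1 + Real.sin θ * f I ≤ 0 := by
    intro θ h1 h2
    rw [← f_exp]
    exact hfcl _ (frontier_subset_closure (hA ⟨θ, h1, h2, rfl⟩))
  have g0 := hAcl θ₀ le_rfl hθ.le
  have g1 := hAcl θ₁ hθ.le le_rfl
  have gγ := hAcl ((θ₀+θ₁)/2) (by linarith) (by linarith)
  have hk : Real.cos ((θ₁ - θ₀)/2) < 0 :=
    Real.cos_neg_of_pi_div_two_lt_of_lt (by linarith) (by linarith)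
  have idcos : Real.cos θ₀ + Real.cos θ₁
      = 2 * Real.cos ((θ₀+θ₁)/2) * Real.cos ((θ₁-θ₀)/2) := by
    rw [Real.cos_add_cos θ₀ θ₁, show (θ₀ - θ₁)/2 = -((θ₁-θ₀)/2) by ring, Real.cos_neg]
  have idsin : Real.sin θ₀ + Real.sin θ₁
      = 2 * Real.sin ((θ₀+θ₁)/2) * Real.cos ((θ₁-θ₀)/2) := by
    have h := Real.sin_sub_sin θ₀ (-θ₁)
    rw [Real.sin_neg, show θ₀ - -θ₁ = θ₀ + θ₁ by ring,
      show (θ₀ + -θ₁)/2 = -((θ₁-θ₀)/2) by ring, Real.cos_neg] at h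
    linarith
  have key : (Real.cos θ₀ * f 1 + Real.sin θ₀ * f I) + (Real.cos θ₁ * f 1 + Real.sin θ₁ * f I)
      = 2 * Real.cos ((θ₁-θ₀)/2) * (Real.cos ((θ₀+θ₁)/2) * f 1 + Real.sin ((θ₀+θ₁)/2) * f I) := by
    linear_combination f 1 * idcos + f I * idsin
  have hprod : 0 ≤ 2 * Real.cos ((θ₁-θ₀)/2) * (Real.cos ((θ₀+θ₁)/2) * f 1 + Real.sin ((θ₀+θ₁)/2) * f I) := by
    nlinarith [mul_nonneg (neg_nonneg.mpr hk.le) (neg_nonneg.mpr gγ)]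
  have e0 : Real.cos θ₀ * f 1 + Real.sin θ₀ * f I = 0 := by linarith
  have e1 : Real.cos θ₁ * f 1 + Real.sin θ₁ * f I = 0 := by linarith
  have eγ : Real.cos ((θ₀+θ₁)/2) * f 1 + Real.sin ((θ₀+θ₁)/2) * f I = 0 := by
    have hz : 2 * Real.cos ((θ₁-θ₀)/2) * (Real.cos ((θ₀+θ₁)/2) * f 1 + Real.sin ((θ₀+θ₁)/2) * f I) = 0 := by
      linarith
    have hk2 : 2 * Real.cos ((θ₁-θ₀)/2) ≠ 0 := by linarith
    rcases mul_eq_zero.mp hz with h | h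
    · exact absurd h hk2
    · exact h
  have su : 0 < Real.sin ((θ₁-θ₀)/2) :=
    Real.sin_pos_of_pos_of_lt_pi (by linarith) (by linarith)
  have hss := Real.sin_sub ((θ₀+θ₁)/2) θ₀
  rw [show (θ₀+θ₁)/2 - θ₀ = (θ₁-θ₀)/2 by ring] at hss
  have hu : f 1 * Real.sin ((θ₁-θ₀)/2) = 0 := by
    rw [hss]
    linear_combination Real.sin ((θ₀+θ₁)/2) * e0 - Real.sin θ₀ * eγ
  have hv : f I * Real.sin ((θ₁-θ₀)/2) = 0 := by
    rw [hss]
    linear_combination Real.cos θ₀ * eγ - Real.cos ((θ₀+θ₁)/2) * e0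
  have hu0 : f 1 = 0 := by
    rcases mul_eq_zero.mp hu with h | h
    · exact h
    · exact absurd h su.ne'
  have hv0 : f I = 0 := by
    rcases mul_eq_zero.mp hv with h | h
    · exact h
    · exact absurd h su.ne'
  obtain ⟨d, hd⟩ := hne
  have hlt := hfD d hd
  rw [f_one_I, hu0, hv0] at hlt
  simp at hlt

private lemma chord (θ₀ θ₁ : ℝ) (hθ : θ₀ < θ₁) (hπ : θ₁ ≤ θ₀ + π)
    (D : Set ℂ) (hne : D.Nonempty) (hopen : IsOpen D) (hconv : Convex ℝ D)
    (hA : {z : ℂ | ∃ θ : ℝ, θ₀ ≤ θ ∧ θ ≤ θ₁ ∧ z = Complex.exp (θ * Complex.I)} ⊆ frontier D)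
    {α β : ℝ} (hα : θ₀ < α) (hαβ : α < β) (hβ : β < θ₁) :
    openSegment ℝ (Complex.exp (α * I)) (Complex.exp (β * I)) ⊆ D := by
  intro z hz
  by_contra hzD
  have hπpos : (0:ℝ) < π := Real.pi_pos
  have hxcl : Complex.exp (α * I) ∈ closure D :=
    frontier_subset_closure (hA ⟨α, by linarith, by linarith, rfl⟩)
  have hycl : Complex.exp (β * I) ∈ closure D :=
    frontier_subset_closure (hA ⟨β, by linarith, by linarith, rfl⟩)
  have hzcl : z ∈ closure D :=
    hconv.closure.segment_subset hxcl hycl (openSegment_subset_segment ℝ _ _ hz)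
  obtain ⟨f, hfD, hfcl⟩ := hb_lemma hopen hconv hzD
  obtain ⟨a, b, ha, hb, hab, hzeq⟩ := hz
  have hfx : f (Complex.exp (α * I)) ≤ f z := hfcl _ hxcl
  have hfy : f (Complex.exp (β * I)) ≤ f z := hfcl _ hycl
  have hfz : a * f (Complex.exp (α * I)) + b * f (Complex.exp (β * I)) = f z := by
    rw [← hzeq, map_add, map_smul, map_smul, smul_eq_mul, smul_eq_mul]
  have habz : ∀ w : ℝ, a * w + b * w = w := fun w => by linear_combination w * hab
  have hfx' : f (Complex.exp (α * I)) = f z := by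
    by_contra hne'
    have hlt : f (Complex.exp (α * I)) < f z := lt_of_le_of_ne hfx hne'
    have h3 : a * f (Complex.exp (α * I)) < a * f z := mul_lt_mul_of_pos_left hlt ha
    have h4 : b * f (Complex.exp (β * I)) ≤ b * f z := mul_le_mul_of_nonneg_left hfy hb.le
    have := habz (f z)
    linarith
  have hfy' : f (Complex.exp (β * I)) = f z := by
    by_contra hne'
    have hlt : f (Complex.exp (β * I)) < f z := lt_of_le_of_ne hfy hne'
    have h3 : b * f (Complex.exp (β * I)) < b * f z := mul_lt_mul_of_pos_left hlt hb
    have h4 : a * f (Complex.exp (α * I)) ≤ a * f z := mul_le_mul_of_nonneg_left hfx ha.le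
    have := habz (f z)
    linarith
  rw [f_exp] at hfx' hfy'
  have hδ0 : 0 < (β-α)/2 := by linarith
  have hδπ : (β-α)/2 < π/2 := by linarith
  have hsδ : 0 < Real.sin ((β-α)/2) :=
    Real.sin_pos_of_pos_of_lt_pi hδ0 (by linarith)
  -- relation f 1 * sin γ = f I * cos γ, where γ = (α+β)/2
  have h1 := Real.cos_sub_cos α β
  rw [show (α-β)/2 = -((β-α)/2) by ring, Real.sin_neg] at h1
  have h2 := Real.sin_sub_sin β α
  rw [show (β+α)/2 = (α+β)/2 by ring, show (β-α)/2 = (β-α)/2 from rfl] at h2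
  have key : f 1 * Real.sin ((α+β)/2) * (2 * Real.sin ((β-α)/2))
      = f I * Real.cos ((α+β)/2) * (2 * Real.sin ((β-α)/2)) := by
    linear_combination (hfx' - hfy') - f 1 * h1 + f I * h2
  have e2 : f 1 * Real.sin ((α+β)/2) = f I * Real.cos ((α+β)/2) :=
    mul_right_cancel₀ (by positivity) key
  have hpyth := Real.sin_sq_add_cos_sq ((α+β)/2)
  have hu : f 1 = Real.cos ((α+β)/2) * (Real.cos ((α+β)/2) * f 1 + Real.sin ((α+β)/2) * f I) := by
    linear_combination (-(f 1)) * hpyth + Real.sin ((α+β)/2) * e2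
  have hv : f I = Real.sin ((α+β)/2) * (Real.cos ((α+β)/2) * f 1 + Real.sin ((α+β)/2) * f I) := by
    linear_combination (-(f I)) * hpyth - Real.cos ((α+β)/2) * e2
  have hGle : Real.cos ((α+β)/2) * f 1 + Real.sin ((α+β)/2) * f I ≤ f z := by
    rw [← f_exp]
    exact hfcl _ (frontier_subset_closure (hA ⟨(α+β)/2, by linarith, by linarith, rfl⟩))
  have hcs := Real.cos_sub ((α+β)/2) α
  rw [show (α+β)/2 - α = (β-α)/2 by ring] at hcs
  have hc : f z = (Real.cos ((α+β)/2) * f 1 + Real.sin ((α+β)/2) * f I) * Real.cos ((β-α)/2) := by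
    rw [hcs]
    linear_combination -hfx' + Real.cos α * hu + Real.sin α * hv
  have hcosδlt : Real.cos ((β-α)/2) < 1 := by
    have h := Real.strictAntiOn_cos ⟨le_rfl, hπpos.le⟩ ⟨hδ0.le, by linarith⟩ hδ0
    rwa [Real.cos_zero] at h
  have hcosδpos : 0 < Real.cos ((β-α)/2) := Real.cos_pos_of_mem_Ioo ⟨by linarith, hδπ⟩
  have hGγ0 : Real.cos ((α+β)/2) * f 1 + Real.sin ((α+β)/2) * f I ≤ 0 := by nlinarith
  rcases eq_or_lt_of_le hGγ0 with hG0 | hGneg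
  · obtain ⟨d, hd⟩ := hne
    have hlt := hfD d hd
    have hc0 : f z = 0 := by rw [hc, hG0, zero_mul]
    have hu0 : f 1 = 0 := by rw [hu, hG0, mul_zero]
    have hv0 : f I = 0 := by rw [hv, hG0, mul_zero]
    rw [f_one_I, hc0, hu0, hv0] at hlt
    simp at hlt
  · have hg0le : Real.cos θ₀ * f 1 + Real.sin θ₀ * f I ≤ f z := by
      rw [← f_exp]
      exact hfcl _ (frontier_subset_closure (hA ⟨θ₀, le_rfl, hθ.le, rfl⟩))
    have hcs0 := Real.cos_sub ((α+β)/2) θ₀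
    have hg0eq : Real.cos θ₀ * f 1 + Real.sin θ₀ * f I
        = (Real.cos ((α+β)/2) * f 1 + Real.sin ((α+β)/2) * f I) * Real.cos ((α+β)/2 - θ₀) := by
      rw [hcs0]
      linear_combination Real.cos θ₀ * hu + Real.sin θ₀ * hv
    have hcc : Real.cos ((α+β)/2 - θ₀) < Real.cos ((β-α)/2) :=
      Real.strictAntiOn_cos ⟨hδ0.le, by linarith⟩ ⟨by linarith, by linarith⟩ (by linarith)
    have h5 : (Real.cos ((α+β)/2) * f 1 + Real.sin ((α+β)/2) * f I) * Real.cos ((β-α)/2)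
        < (Real.cos ((α+β)/2) * f 1 + Real.sin ((α+β)/2) * f I) * Real.cos ((α+β)/2 - θ₀) :=
      mul_lt_mul_of_neg_left hcc hGneg
    linarith
private lemma Tconvex (θ₀ θ₁ : ℝ) :
    Convex ℝ {z : ℂ | 0 < (z * Complex.exp (-θ₀ * I)).im ∧ (z * Complex.exp (-θ₁ * I)).im < 0} := by
  have hlin : ∀ w : ℂ, IsLinearMap ℝ (fun z : ℂ => (z * w).im) := fun w =>
    ⟨fun a b => by simp [add_mul], fun c z => by
      simp only [Complex.real_smul, smul_eq_mul, mul_assoc]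
      simp [Complex.mul_im]⟩
  exact Convex.inter (convex_halfSpace_gt (hlin _) 0) (convex_halfSpace_lt (hlin _) 0)

private lemma sector_mem_T (θ₀ θ₁ : ℝ) (hθ : θ₀ < θ₁) (hπ : θ₁ ≤ θ₀ + π)
    (r θ : ℝ) (hr : 0 < r) (h1 : θ₀ < θ) (h2 : θ < θ₁) :
    0 < ((r * Complex.exp (θ * I)) * Complex.exp (-θ₀ * I)).im ∧
      ((r * Complex.exp (θ * I)) * Complex.exp (-θ₁ * I)).im < 0 := by
  have hπpos : (0:ℝ) < π := Real.pi_pos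
  have key : ∀ φ : ℝ, ((↑r * Complex.exp (↑θ*I)) * Complex.exp (-↑φ*I)).im = r * Real.sin (θ - φ) := by
    intro φ
    rw [mul_assoc, ← Complex.exp_add, show ((↑θ*I + -↑φ*I : ℂ)) = ↑(θ-φ) * I by push_cast; ring]
    simp only [Complex.mul_im, Complex.ofReal_re, Complex.ofReal_im, zero_mul, add_zero]
    rw [show ((↑(θ-φ) : ℂ)) = (↑θ - ↑φ : ℂ) by push_cast; ring] at *
    rw [← Complex.ofReal_sub, Complex.exp_ofReal_mul_I_im]
  constructor
  · rw [key]
    exact mul_pos hr (Real.sin_pos_of_pos_of_lt_pi (by linarith) (by linarith))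
  · rw [key]
    exact mul_neg_of_pos_of_neg hr (Real.sin_neg_of_neg_of_neg_pi_lt (by linarith) (by linarith))

private lemma circle_T_mem_arc (θ₀ θ₁ : ℝ) (hθ : θ₀ < θ₁) (hπ : θ₁ ≤ θ₀ + π) (z : ℂ)
    (habs : ‖z‖ = 1)
    (h1 : 0 < (z * Complex.exp (-θ₀*I)).im) (h2 : (z * Complex.exp (-θ₁*I)).im < 0) :
    ∃ θ : ℝ, θ₀ < θ ∧ θ < θ₁ ∧ z = Complex.exp (θ * I) := by
  have hπpos : (0:ℝ) < π := Real.pi_pos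
  have hz : z = Complex.exp (↑z.arg * I) := by
    conv_lhs => rw [← Complex.norm_mul_exp_arg_mul_I z]
    rw [habs]
    simp
  have hmem := toIcoMod_mem_Ico Real.two_pi_pos θ₀ z.arg
  set ψ := toIcoMod Real.two_pi_pos θ₀ z.arg with hψdef
  have hexp : Complex.exp (↑ψ*I) = Complex.exp (↑z.arg * I) := by
    have hrfl : ψ = z.arg - toIcoDiv Real.two_pi_pos θ₀ z.arg • (2*π) := rfl
    rw [hrfl]
    have e : (↑(z.arg - toIcoDiv Real.two_pi_pos θ₀ z.arg • (2*π)) : ℂ) * I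
        = ↑z.arg * I - (toIcoDiv Real.two_pi_pos θ₀ z.arg : ℂ) * (2 * ↑π * I) := by
      push_cast [zsmul_eq_mul]
      ring
    rw [e, Complex.exp_sub, Complex.exp_int_mul_two_pi_mul_I, div_one]
  have hzψ : z = Complex.exp (↑ψ * I) := by rw [hexp, ← hz]
  have him : ∀ φ : ℝ, (z * Complex.exp (-↑φ*I)).im = Real.sin (ψ - φ) := by
    intro φ
    rw [hzψ, ← Complex.exp_add, show ((↑ψ*I + -↑φ*I : ℂ)) = ↑(ψ-φ) * I by push_cast; ring,
      Complex.exp_ofReal_mul_I_im]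
  rw [him θ₀] at h1
  rw [him θ₁] at h2
  have hψ1 : θ₀ < ψ := by
    rcases eq_or_lt_of_le hmem.1 with h | h
    · exfalso
      rw [← h] at h1
      simp at h1
    · exact h
  have hψπ : ψ - θ₀ < π := by
    by_contra hcon
    push_neg at hcon
    have h' := Real.sin_sub_pi (ψ - θ₀)
    have h'' := Real.sin_nonneg_of_nonneg_of_le_pi (x := ψ - θ₀ - π) (by linarith)
      (by linarith [hmem.2])
    rw [show ψ - θ₀ - π = (ψ - θ₀) - π by ring, h'] at h''
    linarith
  have hψθ₁ : ψ < θ₁ := by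
    by_contra hcon
    push_neg at hcon
    have := Real.sin_nonneg_of_nonneg_of_le_pi (x := ψ - θ₁) (by linarith) (by linarith)
    linarith
  exact ⟨ψ, hψ1, hψθ₁, hzψ⟩

private lemma crossing (x y : ℂ) (hx : 1 < ‖x‖) (r : ℝ) (hr0 : 0 ≤ r) (hr1 : r ≤ 1)
    (hry : ‖x + r • (y - x)‖ ≤ 1) :
    ∃ s : ℝ, 0 < s ∧ s ≤ r ∧ ‖x + s • (y - x)‖ = 1 ∧
      ∀ u, 0 ≤ u → u < s → 1 < ‖x + u • (y - x)‖ := by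
  set g : ℝ → ℝ := fun t => ‖x + t • (y - x)‖ with hg
  have hgc : Continuous g := by
    apply continuous_norm.comp
    exact continuous_const.add (continuous_id.smul continuous_const)
  set E : Set ℝ := Icc 0 r ∩ {t | g t ≤ 1} with hE
  have hEcl : IsClosed E := isClosed_Icc.inter (isClosed_le hgc continuous_const)
  have hEne : E.Nonempty := ⟨r, ⟨hr0, le_rfl⟩, hry⟩
  have hEbdd : BddBelow E := ⟨0, fun t ht => ht.1.1⟩
  have hsE := hEcl.csInf_mem hEne hEbdd
  set s := sInf E with hs
  have hmin : ∀ u, 0 ≤ u → u < s → 1 < g u := by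
    intro u hu hus
    by_contra hc
    push_neg at hc
    have hmemE : u ∈ E := ⟨⟨hu, hus.le.trans hsE.1.2⟩, hc⟩
    exact absurd (csInf_le hEbdd hmemE) (not_le.2 hus)
  have hs0 : 0 < s := by
    rcases eq_or_lt_of_le hsE.1.1 with h | h
    · exfalso
      have hgs := hsE.2
      rw [← h] at hgs
      have : ‖x + (0:ℝ) • (y - x)‖ ≤ 1 := hgs
      simp at this
      linarith
    · exact h
  have hgs : g s = 1 := by
    have hle : g s ≤ 1 := hsE.2
    rcases eq_or_lt_of_le hle with h | h
    · exact h
    · exfalso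
      have hev : ∀ᶠ t in nhds s, g t < 1 := hgc.continuousAt.eventually_lt continuousAt_const h
      rw [Metric.eventually_nhds_iff] at hev
      obtain ⟨ε, hε, hball⟩ := hev
      have ht0 : 0 ≤ max 0 (s - ε/2) := le_max_left _ _
      have hts : max 0 (s - ε/2) < s := max_lt hs0 (by linarith)
      have hdist : dist (max 0 (s - ε/2)) s < ε := by
        rw [Real.dist_eq, abs_lt]
        have h1 : s - ε/2 ≤ max 0 (s - ε/2) := le_max_right _ _
        constructor <;> [linarith; linarith]
      exact absurd (hball hdist) (not_lt.2 (hmin _ ht0 hts).le)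
  exact ⟨s, hs0, hsE.1.2, hgs, hmin⟩

private lemma iota_eq (r θ : ℝ) (hr : 0 < r) :
    (starRingEnd ℂ (↑r * Complex.exp (↑θ * I)))⁻¹ = ↑r⁻¹ * Complex.exp (↑θ * I) := by
  rw [map_mul, mul_inv]
  congr 1
  · rw [Complex.conj_ofReal, ← Complex.ofReal_inv]
  · rw [← Complex.exp_conj, map_mul, Complex.conj_ofReal, Complex.conj_I,
      show ((θ:ℂ) * -I) = -(↑θ*I) by ring, Complex.exp_neg, inv_inv]
section Main

variable (θ₀ θ₁ : ℝ)

private lemma convDA (hθ : θ₀ < θ₁) (hπ : θ₁ ≤ θ₀ + π)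
    (D : Set ℂ) (hne : D.Nonempty) (hopen : IsOpen D) (hconv : Convex ℝ D)
    (hA : {z : ℂ | ∃ θ : ℝ, θ₀ ≤ θ ∧ θ ≤ θ₁ ∧ z = Complex.exp (θ * Complex.I)} ⊆ frontier D) :
    ∀ x ∈ D ∪ {z : ℂ | ∃ θ : ℝ, θ₀ < θ ∧ θ < θ₁ ∧ z = Complex.exp (θ * Complex.I)},
      ∀ y ∈ D ∪ {z : ℂ | ∃ θ : ℝ, θ₀ < θ ∧ θ < θ₁ ∧ z = Complex.exp (θ * Complex.I)},
        segment ℝ x y ⊆ D ∪ {z : ℂ | ∃ θ : ℝ, θ₀ < θ ∧ θ < θ₁ ∧ z = Complex.exp (θ * Complex.I)} := by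
  intro x hx y hy w hw
  have hcl : D ∪ {z : ℂ | ∃ θ : ℝ, θ₀ < θ ∧ θ < θ₁ ∧ z = Complex.exp (θ * Complex.I)} ⊆ closure D := by
    refine union_subset subset_closure fun z hz => ?_
    obtain ⟨θ, h1, h2, hzz⟩ := hz
    exact frontier_subset_closure (hA ⟨θ, h1.le, h2.le, hzz⟩)
  rw [← insert_endpoints_openSegment] at hw
  rcases hw with rfl | hw
  · exact hx
  rcases hw with rfl | hw
  · exact hy
  rcases hx with hx | hx
  · left
    have h := hconv.openSegment_interior_closure_subset_interior
      (by rwa [hopen.interior_eq]) (hcl hy) hw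
    rwa [hopen.interior_eq] at h
  rcases hy with hy | hy
  · left
    rw [openSegment_symm] at hw
    have h := hconv.openSegment_interior_closure_subset_interior
      (by rwa [hopen.interior_eq]) (hcl (Or.inr hx)) hw
    rwa [hopen.interior_eq] at h
  obtain ⟨α, hα1, hα2, rfl⟩ := hx
  obtain ⟨β, hβ1, hβ2, rfl⟩ := hy
  rcases lt_trichotomy α β with h | h | h
  · exact Or.inl (chord θ₀ θ₁ hθ hπ D hne hopen hconv hA hα1 h hβ2 hw)
  · subst h
    rw [openSegment_same] at hw
    rcases hw with rfl
    exact Or.inr ⟨α, hα1, hα2, rfl⟩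
  · rw [openSegment_symm] at hw
    exact Or.inl (chord θ₀ θ₁ hθ hπ D hne hopen hconv hA hβ1 h hα2 hw)

end Main

/-- With `D` as in the main setting, `D_s = ι(D)` and
`D* = D ∪ A° ∪ D_s`, the set `D*` is convex iff for every `w₁ ∈ D_s` and
`w₂ ∈ A° ∪ D_s` such that `[w₁, w₂] ∩ A°` is empty or `{w₂}`, one has
`[w₁, w₂] ⊆ D*`. -/
theorem stmt_1 (θ₀ θ₁ : ℝ) (hθ : θ₀ < θ₁) (hθ' : θ₁ < θ₀ + 2 * π)
    (D : Set ℂ) (hne : D.Nonempty) (hopen : IsOpen D) (hconv : Convex ℝ D)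
    (hsub : D ⊆
      {z : ℂ | ∃ r θ : ℝ, 0 < r ∧ θ₀ < θ ∧ θ < θ₁ ∧ z = r * Complex.exp (θ * Complex.I)} ∩
      {z : ℂ | ‖z‖ < 1})
    (hA : {z : ℂ | ∃ θ : ℝ, θ₀ ≤ θ ∧ θ ≤ θ₁ ∧ z = Complex.exp (θ * Complex.I)} ⊆ frontier D) :
    Convex ℝ (D ∪ {z : ℂ | ∃ θ : ℝ, θ₀ < θ ∧ θ < θ₁ ∧ z = Complex.exp (θ * Complex.I)} ∪
        (fun z : ℂ => (starRingEnd ℂ z)⁻¹) '' D) ↔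
      ∀ w₁ ∈ (fun z : ℂ => (starRingEnd ℂ z)⁻¹) '' D,
        ∀ w₂ ∈ {z : ℂ | ∃ θ : ℝ, θ₀ < θ ∧ θ < θ₁ ∧ z = Complex.exp (θ * Complex.I)} ∪
            (fun z : ℂ => (starRingEnd ℂ z)⁻¹) '' D,
          (segment ℝ w₁ w₂ ∩
              {z : ℂ | ∃ θ : ℝ, θ₀ < θ ∧ θ < θ₁ ∧ z = Complex.exp (θ * Complex.I)} = ∅ ∨
            segment ℝ w₁ w₂ ∩
              {z : ℂ | ∃ θ : ℝ, θ₀ < θ ∧ θ < θ₁ ∧ z = Complex.exp (θ * Complex.I)} = {w₂}) →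
          segment ℝ w₁ w₂ ⊆
            D ∪ {z : ℂ | ∃ θ : ℝ, θ₀ < θ ∧ θ < θ₁ ∧ z = Complex.exp (θ * Complex.I)} ∪
              (fun z : ℂ => (starRingEnd ℂ z)⁻¹) '' D := by
  set Aop : Set ℂ := {z : ℂ | ∃ θ : ℝ, θ₀ < θ ∧ θ < θ₁ ∧ z = Complex.exp (θ * Complex.I)} with hAopdef
  set Ds : Set ℂ := (fun z : ℂ => (starRingEnd ℂ z)⁻¹) '' D with hDsdef
  constructor
  · intro hc w₁ hw₁ w₂ hw₂ _
    exact hc.segment_subset (Or.inr hw₁) (hw₂.elim (fun h => Or.inl (Or.inr h)) Or.inr)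
  · intro H
    have hπ : θ₁ ≤ θ₀ + π := halfpi θ₀ θ₁ hθ hθ' D hne hopen hconv hsub hA
    have hDA := convDA θ₀ θ₁ hθ hπ D hne hopen hconv hA
    rw [← hAopdef] at hDA
    set TT : Set ℂ := {z : ℂ | 0 < (z * Complex.exp (-θ₀ * I)).im ∧
        (z * Complex.exp (-θ₁ * I)).im < 0} with hTTdef
    have hTconv : Convex ℝ TT := Tconvex θ₀ θ₁
    have hDT : D ⊆ TT := by
      intro d hd
      obtain ⟨r, θ, hr, h1, h2, rfl⟩ := (hsub hd).1
      rw [hTTdef]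
      exact sector_mem_T θ₀ θ₁ hθ hπ r θ hr h1 h2
    have hAopT : Aop ⊆ TT := by
      intro z hz
      obtain ⟨θ, h1, h2, rfl⟩ := hz
      have h := sector_mem_T θ₀ θ₁ hθ hπ 1 θ one_pos h1 h2
      have e : ((1:ℝ):ℂ) * Complex.exp (↑θ * I) = Complex.exp (↑θ * I) := by simp
      rw [e] at h
      rw [hTTdef]
      exact h
    have hDsT : Ds ⊆ TT := by
      rintro w ⟨d, hd, rfl⟩
      obtain ⟨r, θ, hr, h1, h2, rfl⟩ := (hsub hd).1
      rw [hTTdef]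
      show ((starRingEnd ℂ (↑r * Complex.exp (↑θ * I)))⁻¹) ∈ _
      rw [iota_eq r θ hr]
      exact sector_mem_T θ₀ θ₁ hθ hπ r⁻¹ θ (by positivity) h1 h2
    have hDsabs : ∀ w ∈ Ds, 1 < ‖w‖ := by
      rintro w ⟨d, hd, rfl⟩
      have h1 : ‖d‖ < 1 := (hsub hd).2
      have hpos : 0 < ‖d‖ := by
        obtain ⟨r, θ, hr, -, -, rfl⟩ := (hsub hd).1
        simp [Complex.norm_exp_ofReal_mul_I, Complex.norm_real, abs_of_pos hr, hr]
      show 1 < ‖(starRingEnd ℂ d)⁻¹‖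
      rw [norm_inv, Complex.norm_conj]
      exact one_lt_inv_iff₀.mpr ⟨hpos, h1⟩
    have hAopAbs : ∀ w ∈ Aop, ‖w‖ = 1 := by
      rintro w ⟨θ, -, -, rfl⟩
      exact Complex.norm_exp_ofReal_mul_I θ
    have hTcirc : ∀ z ∈ TT, ‖z‖ = 1 → z ∈ Aop := fun z hz habs =>
      circle_T_mem_arc θ₀ θ₁ hθ hπ z habs hz.1 hz.2
    have hDstT : D ∪ Aop ∪ Ds ⊆ TT := union_subset (union_subset hDT hAopT) hDsT
    have BLOCK : ∀ x, x ∈ Ds → ∀ y, y ∈ D ∪ Aop ∪ Ds → segment ℝ x y ⊆ D ∪ Aop ∪ Ds := by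
      intro x hxDs y hy
      have hxT : x ∈ TT := hDsT hxDs
      have hyT : y ∈ TT := hDstT hy
      have hxabs : 1 < ‖x‖ := hDsabs x hxDs
      have hz0 : x + (0:ℝ) • (y - x) = x := by simp
      have hz1 : x + (1:ℝ) • (y - x) = y := by simp
      have pmem : ∀ s : ℝ, 0 ≤ s → s ≤ 1 → ‖x + s • (y-x)‖ = 1 →
          (x + s • (y-x)) ∈ Aop := by
        intro s h0 h1 habs
        apply hTcirc _ _ habs
        have hmem := mem_seg_param x y h0 h1
        rw [hz0, hz1] at hmem
        exact hTconv.segment_subset hxT hyT hmem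
      have HX : ∀ s : ℝ, 0 < s → s ≤ 1 → ‖x + s • (y-x)‖ = 1 →
          (∀ u, 0 ≤ u → u < s → 1 < ‖x + u • (y-x)‖) →
          segment ℝ x (x + s • (y-x)) ⊆ D ∪ Aop ∪ Ds := by
        intro s hs0 hs1 habs hminx
        have hp : (x + s • (y-x)) ∈ Aop := pmem s hs0.le hs1 habs
        apply H x hxDs _ (Or.inl hp)
        right
        apply Subset.antisymm
        · rintro w ⟨hw1, hw2⟩
          obtain ⟨u, hu0, hus, rfl⟩ := seg_param_mem2 x y hs0.le (by simp) rfl hw1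
          have habsw : ‖x + u • (y-x)‖ = 1 := hAopAbs _ hw2
          have hueq : u = s := by
            rcases eq_or_lt_of_le hus with h | h
            · exact h
            · exfalso
              have hgt := hminx u hu0 h
              rw [habsw] at hgt
              exact lt_irrefl _ hgt
          rw [hueq]
          rfl
        · rw [singleton_subset_iff]
          exact ⟨right_mem_segment ℝ _ _, hp⟩
      rcases hy with hyDA | hyDs
      · -- y ∈ D ∪ Aop
        have hyabs : ‖y‖ ≤ 1 := by
          rcases hyDA with hyD | hyAop
          · exact ((hsub hyD).2).le
          · exact (hAopAbs y hyAop).le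
        have hry : ‖x + (1:ℝ) • (y - x)‖ ≤ 1 := by rwa [hz1]
        obtain ⟨s, hs0, hs1, habs, hminx⟩ := crossing x y hxabs 1 zero_le_one le_rfl hry
        have hseg1 := HX s hs0 hs1 habs hminx
        have hp : (x + s • (y-x)) ∈ Aop := pmem s hs0.le hs1 habs
        have hseg2 : segment ℝ (x + s • (y-x)) y ⊆ D ∪ Aop := hDA _ (Or.inr hp) _ hyDA
        intro w hw
        obtain ⟨u, hu0, hu1, rfl⟩ := seg_param_mem2 x y zero_le_one (by simp) (by simp) hw
        rcases le_or_gt u s with h | h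
        · apply hseg1
          have hmem := mem_seg_param x y hu0 h
          rwa [hz0] at hmem
        · have hmem := mem_seg_param x y h.le hu1
          rw [hz1] at hmem
          exact Or.inl (hseg2 hmem)
      · -- y ∈ Ds
        by_cases hint : segment ℝ x y ∩ Aop = ∅
        · exact H x hxDs y (Or.inr hyDs) (Or.inl hint)
        rw [← Ne, ← nonempty_iff_ne_empty] at hint
        obtain ⟨w0, hw0seg, hw0Aop⟩ := hint
        obtain ⟨r, hr0, hr1, rfl⟩ := seg_param_mem2 x y zero_le_one (by simp) (by simp) hw0seg
        have hrabs : ‖x + r • (y-x)‖ = 1 := hAopAbs _ hw0Aop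
        obtain ⟨s, hs0, hsr, hsabs, hminx⟩ := crossing x y hxabs r hr0 hr1 hrabs.le
        have hyabs : 1 < ‖y‖ := hDsabs y hyDs
        have hflip : ∀ u : ℝ, y + u • (x - y) = x + (1-u) • (y - x) := flip_param x y
        have hry' : ‖y + (1-r) • (x - y)‖ ≤ 1 := by
          rw [hflip, show (1:ℝ)-(1-r) = r by ring]
          exact hrabs.le
        obtain ⟨s', hs'0, hs'r, hs'abs, hminy⟩ := crossing y x hyabs (1-r) (by linarith)
          (by linarith) hry'
        have htabs : ‖x + (1-s') • (y-x)‖ = 1 := by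
          rw [← hflip]
          exact hs'abs
        have hminy' : ∀ u, 1-s' < u → u ≤ 1 → 1 < ‖x + u • (y-x)‖ := by
          intro u h1 h2
          have h := hminy (1-u) (by linarith) (by linarith)
          rwa [hflip, show (1:ℝ)-(1-u) = u by ring] at h
        have hseg1 := HX s hs0 (by linarith) hsabs hminx
        have hp : (x + s • (y-x)) ∈ Aop := pmem s hs0.le (by linarith) hsabs
        have hq : (x + (1-s') • (y-x)) ∈ Aop := pmem _ (by linarith) (by linarith) htabs
        have hseg3 : segment ℝ y (x + (1-s') • (y-x)) ⊆ D ∪ Aop ∪ Ds := by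
          apply H y hyDs _ (Or.inl hq)
          right
          apply Subset.antisymm
          · rintro w ⟨hw1, hw2⟩
            rw [segment_symm] at hw1
            obtain ⟨u, hut, hu1, rfl⟩ := seg_param_mem2 x y (by linarith : 1-s' ≤ (1:ℝ)) rfl (by simp) hw1
            have habsw : ‖x + u • (y-x)‖ = 1 := hAopAbs _ hw2
            have hueq : u = 1 - s' := by
              rcases eq_or_lt_of_le hut with h | h
              · exact h.symm
              · exfalso
                have hgt := hminy' u h hu1
                rw [habsw] at hgt
                exact lt_irrefl _ hgt
            rw [hueq]
            rfl
          · rw [singleton_subset_iff]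
            exact ⟨right_mem_segment ℝ _ _, hq⟩
        have hseg2 : segment ℝ (x + s • (y-x)) (x + (1-s') • (y-x)) ⊆ D ∪ Aop :=
          hDA _ (Or.inr hp) _ (Or.inr hq)
        have hst : s ≤ 1 - s' := by linarith
        intro w hw
        obtain ⟨u, hu0, hu1, rfl⟩ := seg_param_mem2 x y zero_le_one (by simp) (by simp) hw
        rcases le_or_gt u s with h | h
        · apply hseg1
          have hmem := mem_seg_param x y hu0 h
          rwa [hz0] at hmem
        rcases le_or_gt u (1-s') with h2 | h2
        · exact Or.inl (hseg2 (mem_seg_param x y h.le h2))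
        · apply hseg3
          rw [segment_symm]
          have hmem := mem_seg_param x y h2.le hu1
          rwa [hz1] at hmem
    rw [convex_iff_segment_subset]
    intro x hx y hy
    rcases hx with hxDA | hxDs
    · rcases hy with hyDA | hyDs
      · exact fun w hw => Or.inl (hDA x hxDA y hyDA hw)
      · rw [segment_symm]
        exact BLOCK y hyDs x (Or.inl hxDA)
    · exact BLOCK x hxDs y hy
end

section
/- Let θ₀ < θ₁ < θ₀ + 2π be real numbers and let D be a nonempty open convex subset of ℂ with D ⊆ S ∩ U and A ⊆ ∂D. Let U⁺ = {z ∈ U : Im z > 0} be the open upper half-disk, and let f be a function that is continuous on the closure of U⁺, holomorphic and injective on U⁺, with f(U⁺) = D, f((−1,1)) = A°, and f([−1,1]) ⊆ ∂U. Define F : U → ℂ by F(z) = f(z) when Im z ≥ 0 and F(z) = 1/conj(f(conj z)) when Im z < 0. Then F is holomorphic and injective on U, F agrees with f on U⁺ ∪ (−1,1), and F(U) = D ∪ A° ∪ ι(D). -/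
open Complex Set Real intervalIntegral

noncomputable def rectInt (F : ℂ → ℂ) (z w : ℂ) : ℂ :=
  (∫ x : ℝ in z.re..w.re, F (x + z.im * I)) - (∫ x : ℝ in z.re..w.re, F (x + w.im * I)) +
    I • (∫ y : ℝ in z.im..w.im, F (w.re + y * I)) -
    I • (∫ y : ℝ in z.im..w.im, F (z.re + y * I))

lemma vert_integrable {F : ℂ → ℂ} {s : Set ℂ} {x a b : ℝ}
    (hF : ContinuousOn F s) (hsub : ∀ y ∈ uIcc a b, (x : ℂ) + y * I ∈ s) :
    IntervalIntegrable (fun y : ℝ => F ((x : ℂ) + y * I)) MeasureTheory.volume a b := by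
  apply ContinuousOn.intervalIntegrable
  exact hF.comp (Continuous.continuousOn (by continuity)) hsub

lemma horiz_integrable {F : ℂ → ℂ} {s : Set ℂ} {y a b : ℝ}
    (hF : ContinuousOn F s) (hsub : ∀ x ∈ uIcc a b, (x : ℂ) + y * I ∈ s) :
    IntervalIntegrable (fun x : ℝ => F ((x : ℂ) + y * I)) MeasureTheory.volume a b := by
  apply ContinuousOn.intervalIntegrable
  exact hF.comp (Continuous.continuousOn (by continuity)) hsub

lemma mem_rect {z w : ℂ} {x y : ℝ} (hx : x ∈ uIcc z.re w.re) (hy : y ∈ uIcc z.im w.im) :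
    (x : ℂ) + y * I ∈ uIcc z.re w.re ×ℂ uIcc z.im w.im := by
  constructor <;> simp [hx, hy]

lemma rectInt_split (F : ℂ → ℂ) (z w : ℂ) (c : ℝ) (hc : c ∈ uIcc z.im w.im)
    (hF : ContinuousOn F (uIcc z.re w.re ×ℂ uIcc z.im w.im)) :
    rectInt F z w = rectInt F z (↑w.re + ↑c * I) + rectInt F (↑z.re + ↑c * I) w := by
  have key : ∀ x ∈ uIcc z.re w.re,
      (∫ y : ℝ in z.im..w.im, F ((x:ℂ) + y * I)) =
        (∫ y : ℝ in z.im..c, F ((x:ℂ) + y * I)) + ∫ y : ℝ in c..w.im, F ((x:ℂ) + y * I) := by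
    intro x hx
    refine (intervalIntegral.integral_add_adjacent_intervals ?_ ?_).symm
    · exact vert_integrable hF (fun y hy => mem_rect hx (uIcc_subset_uIcc left_mem_uIcc hc hy))
    · exact vert_integrable hF (fun y hy => mem_rect hx (uIcc_subset_uIcc hc right_mem_uIcc hy))
  simp only [rectInt, add_re, add_im, ofReal_re, ofReal_im, mul_re, mul_im, I_re, I_im,
    mul_zero, mul_one, zero_mul, sub_zero, zero_sub, zero_add, add_zero, neg_neg, neg_zero,
    smul_eq_mul]
  rw [key _ left_mem_uIcc, key _ right_mem_uIcc]
  ring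
lemma rectInt_zero_side {V : Set ℂ} {F : ℂ → ℂ}
    (hc : ContinuousOn F V) (hd : ∀ z ∈ V, z.im ≠ 0 → DifferentiableAt ℂ F z)
    {z w : ℂ} (hsub : uIcc z.re w.re ×ℂ uIcc z.im w.im ⊆ V)
    (hside : 0 ≤ min z.im w.im ∨ max z.im w.im ≤ 0) :
    rectInt F z w = 0 := by
  apply Complex.integral_boundary_rect_eq_zero_of_continuousOn_of_differentiableOn F z w
    (hc.mono hsub)
  intro x hx
  refine (hd x (hsub ⟨Ioo_subset_Icc_self hx.1, Ioo_subset_Icc_self hx.2⟩) ?_).differentiableWithinAt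
  rcases hside with h | h
  · exact ne_of_gt (lt_of_le_of_lt h hx.2.1)
  · exact ne_of_lt (lt_of_lt_of_le hx.2.2 h)

lemma rectInt_zero {V : Set ℂ} {F : ℂ → ℂ}
    (hc : ContinuousOn F V) (hd : ∀ z ∈ V, z.im ≠ 0 → DifferentiableAt ℂ F z)
    {z w : ℂ} (hsub : uIcc z.re w.re ×ℂ uIcc z.im w.im ⊆ V) :
    rectInt F z w = 0 := by
  rcases le_or_gt 0 (min z.im w.im) with h | h
  · exact rectInt_zero_side hc hd hsub (Or.inl h)
  rcases le_or_gt (max z.im w.im) 0 with h' | h'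
  · exact rectInt_zero_side hc hd hsub (Or.inr h')
  have h0 : (0 : ℝ) ∈ uIcc z.im w.im := by
    rw [Set.uIcc, Set.mem_Icc]
    exact ⟨h.le, h'.le⟩
  rw [rectInt_split F z w 0 h0 (hc.mono hsub)]
  have e1 : ((w.re : ℂ) + ((0:ℝ):ℂ) * I).re = w.re := by simp
  have e2 : ((w.re : ℂ) + ((0:ℝ):ℂ) * I).im = 0 := by simp
  have e3 : ((z.re : ℂ) + ((0:ℝ):ℂ) * I).re = z.re := by simp
  have e4 : ((z.re : ℂ) + ((0:ℝ):ℂ) * I).im = 0 := by simp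
  have hs1 : uIcc z.re ((w.re : ℂ) + ((0:ℝ):ℂ) * I).re ×ℂ
      uIcc z.im ((w.re : ℂ) + ((0:ℝ):ℂ) * I).im ⊆ V := by
    rw [e1, e2]
    refine subset_trans (Complex.reProdIm_subset_iff.mpr
      (Set.prod_mono (subset_refl _) (uIcc_subset_uIcc left_mem_uIcc h0))) hsub
  have hs2 : uIcc ((z.re : ℂ) + ((0:ℝ):ℂ) * I).re w.re ×ℂ
      uIcc ((z.re : ℂ) + ((0:ℝ):ℂ) * I).im w.im ⊆ V := by
    rw [e3, e4]
    refine subset_trans (Complex.reProdIm_subset_iff.mpr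
      (Set.prod_mono (subset_refl _) (uIcc_subset_uIcc h0 right_mem_uIcc))) hsub
  rw [rectInt_zero_side hc hd hs1 ?_, rectInt_zero_side hc hd hs2 ?_, add_zero]
  · rw [e4]
    rcases le_total 0 w.im with hw | hw
    · exact Or.inl (le_min le_rfl hw)
    · exact Or.inr (max_le le_rfl hw)
  · rw [e2]
    rcases le_total z.im 0 with hz | hz
    · exact Or.inr (max_le hz le_rfl)
    · exact Or.inl (le_min hz le_rfl)
lemma abs_sub_le_of_uIcc {a b c δ x : ℝ} (h1 : |a - c| ≤ δ) (h2 : |b - c| ≤ δ)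
    (hx : x ∈ uIcc a b) : |x - c| ≤ δ := by
  rw [Set.uIcc, Set.mem_Icc] at hx
  rw [abs_le] at h1 h2 ⊢
  constructor
  · linarith [le_min (show c - δ ≤ a by linarith) (show c - δ ≤ b by linarith), hx.1]
  · linarith [max_le (show a ≤ c + δ by linarith) (show b ≤ c + δ by linarith), hx.2]

set_option maxHeartbeats 1000000 in
lemma morera_line {V : Set ℂ} (hV : IsOpen V) {F : ℂ → ℂ}
    (hc : ContinuousOn F V) (hd : ∀ z ∈ V, z.im ≠ 0 → DifferentiableAt ℂ F z) :
    DifferentiableOn ℂ F V := by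
  intro z₀ hz₀
  rcases ne_or_eq z₀.im 0 with him0 | him0
  · exact (hd z₀ hz₀ him0).differentiableWithinAt
  obtain ⟨ε, hε, hball⟩ := Metric.isOpen_iff.mp hV z₀ hz₀
  have hδ : 0 < ε / 3 := by positivity
  set δ := ε / 3 with hδdef
  set x₀ := z₀.re with hx₀
  set y₀ := z₀.im with hy₀
  have hQV : ∀ w : ℂ, |w.re - x₀| ≤ δ → |w.im - y₀| ≤ δ → w ∈ V := by
    intro w h1 h2
    apply hball
    rw [Metric.mem_ball, Complex.dist_eq]
    calc ‖w - z₀‖ ≤ |(w - z₀).re| + |(w - z₀).im| := Complex.norm_le_abs_re_add_abs_im _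
    _ = |w.re - x₀| + |w.im - y₀| := by rw [Complex.sub_re, Complex.sub_im]
    _ ≤ δ + δ := add_le_add h1 h2
    _ < ε := by rw [hδdef]; linarith
  have hintH : ∀ a b yy : ℝ, |a - x₀| ≤ δ → |b - x₀| ≤ δ → |yy - y₀| ≤ δ →
      IntervalIntegrable (fun x : ℝ => F ((x : ℂ) + yy * I)) MeasureTheory.volume a b := by
    intro a b yy h1 h2 h3
    refine horiz_integrable hc (fun x hx => hQV _ ?_ ?_)
    · simpa using abs_sub_le_of_uIcc h1 h2 hx
    · simpa using h3
  have hintV : ∀ a b xx : ℝ, |a - y₀| ≤ δ → |b - y₀| ≤ δ → |xx - x₀| ≤ δ →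
      IntervalIntegrable (fun y : ℝ => F ((xx : ℂ) + y * I)) MeasureTheory.volume a b := by
    intro a b xx h1 h2 h3
    refine vert_integrable hc (fun y hy => hQV _ ?_ ?_)
    · simpa using h3
    · simpa using abs_sub_le_of_uIcc h1 h2 hy
  set g : ℂ → ℂ := fun w => (∫ x : ℝ in x₀..w.re, F ((x : ℂ) + (y₀ : ℂ) * I)) +
      I • ∫ y : ℝ in y₀..w.im, F ((w.re : ℂ) + (y : ℂ) * I) with hgdef
  have key : ∀ w : ℂ, |w.re - x₀| < δ → |w.im - y₀| < δ → HasDerivAt g (F w) w := by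
    intro w hw1 hw2
    rw [hasDerivAt_iff_isLittleO, Asymptotics.isLittleO_iff]
    intro c hc0
    have hwV : w ∈ V := hQV w hw1.le hw2.le
    have hFw : ContinuousAt F w := hc.continuousAt (hV.mem_nhds hwV)
    obtain ⟨η₁, hη₁, hFη⟩ := Metric.continuousAt_iff.mp hFw (c / 2) (by positivity)
    set η := min (η₁ / 3) (min (δ - |w.re - x₀|) (δ - |w.im - y₀|)) with hηdef
    have hη : 0 < η := by
      refine lt_min (by positivity) (lt_min (by linarith) (by linarith))
    filter_upwards [Metric.ball_mem_nhds w hη] with w' hw'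
    have hdist : ‖w' - w‖ < η := by rwa [Metric.mem_ball, Complex.dist_eq] at hw'
    have hre1 : |w'.re - w.re| ≤ ‖w' - w‖ := by
      simpa [Complex.sub_re] using Complex.abs_re_le_norm (w' - w)
    have him1 : |w'.im - w.im| ≤ ‖w' - w‖ := by
      simpa [Complex.sub_im] using Complex.abs_im_le_norm (w' - w)
    have hre' : |w'.re - x₀| ≤ δ := by
      have : |w'.re - x₀| ≤ |w'.re - w.re| + |w.re - x₀| := abs_sub_le _ _ _
      have h2 : η ≤ δ - |w.re - x₀| := le_trans (min_le_right _ _) (min_le_left _ _)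
      linarith
    have him' : |w'.im - y₀| ≤ δ := by
      have : |w'.im - y₀| ≤ |w'.im - w.im| + |w.im - y₀| := abs_sub_le _ _ _
      have h2 : η ≤ δ - |w.im - y₀| := le_trans (min_le_right _ _) (min_le_right _ _)
      linarith
    have hηsmall : η ≤ η₁ / 3 := min_le_left _ _
    -- small distance implies F-closeness
    have hclose : ∀ u : ℂ, ‖u - w‖ ≤ 2 * ‖w' - w‖ →
        ‖F u - F w‖ ≤ c / 2 := by
      intro u hu
      have : dist u w < η₁ := by
        rw [Complex.dist_eq]
        calc ‖u - w‖ ≤ 2 * ‖w' - w‖ := hu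
        _ < 2 * η := by linarith
        _ ≤ 2 * (η₁ / 3) := by linarith
        _ < η₁ := by linarith
      have := hFη this
      rw [dist_eq_norm] at this
      exact this.le
    -- the rectangle identity
    have h3 := rectInt_zero hc hd (z := (w.re : ℂ) + (y₀ : ℂ) * I) (w := (w'.re : ℂ) + (w.im : ℂ) * I) ?rect
    case rect =>
      intro p hp
      simp only [Complex.add_re, Complex.add_im, Complex.ofReal_re, Complex.ofReal_im,
        Complex.mul_re, Complex.mul_im, Complex.I_re, Complex.I_im, mul_zero, mul_one, zero_mul,
        sub_zero, zero_sub, zero_add, add_zero, neg_zero, neg_neg] at hp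
      exact hQV p (abs_sub_le_of_uIcc hw1.le hre' hp.1) (abs_sub_le_of_uIcc (by simpa using hδ.le) hw2.le hp.2)
    simp only [rectInt, Complex.add_re, Complex.add_im, Complex.ofReal_re, Complex.ofReal_im,
      Complex.mul_re, Complex.mul_im, Complex.I_re, Complex.I_im, mul_zero, mul_one, zero_mul,
      sub_zero, zero_sub, zero_add, add_zero, neg_zero, neg_neg, smul_eq_mul] at h3
    have step1 : (∫ x : ℝ in x₀..w'.re, F ((x : ℂ) + (y₀ : ℂ) * I)) -
        (∫ x : ℝ in x₀..w.re, F ((x : ℂ) + (y₀ : ℂ) * I)) =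
        ∫ x : ℝ in w.re..w'.re, F ((x : ℂ) + (y₀ : ℂ) * I) :=
      intervalIntegral.integral_interval_sub_left
        (hintH _ _ _ (by simpa using hδ.le) hre' (by simpa using hδ.le))
        (hintH _ _ _ (by simpa using hδ.le) hw1.le (by simpa using hδ.le))
    have step2 : (∫ y : ℝ in y₀..w'.im, F ((w'.re : ℂ) + (y : ℂ) * I)) -
        (∫ y : ℝ in y₀..w.im, F ((w'.re : ℂ) + (y : ℂ) * I)) =
        ∫ y : ℝ in w.im..w'.im, F ((w'.re : ℂ) + (y : ℂ) * I) :=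
      intervalIntegral.integral_interval_sub_left
        (hintV _ _ _ (by simpa using hδ.le) him' hre')
        (hintV _ _ _ (by simpa using hδ.le) hw2.le hre')
    have hident : g w' - g w = (∫ x : ℝ in w.re..w'.re, F ((x : ℂ) + (w.im : ℂ) * I)) +
        I * ∫ y : ℝ in w.im..w'.im, F ((w'.re : ℂ) + (y : ℂ) * I) := by
      simp only [hgdef, smul_eq_mul]
      linear_combination step1 + I * step2 + h3
    -- now the estimate
    have hsplit : (w' - w) • F w = (((w'.re - w.re : ℝ) : ℂ)) • F w +
        I * (((w'.im - w.im : ℝ) : ℂ) • F w) := by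
      have : w' - w = ((w'.re - w.re : ℝ) : ℂ) + ((w'.im - w.im : ℝ) : ℂ) * I := by
        simp [Complex.ext_iff]
      rw [smul_eq_mul, smul_eq_mul, smul_eq_mul, this]
      ring
    have hc1 : (∫ _x : ℝ in w.re..w'.re, F w) = ((w'.re - w.re : ℝ) : ℂ) • F w := by
      rw [intervalIntegral.integral_const]
      simp
    have hc2 : (∫ _y : ℝ in w.im..w'.im, F w) = ((w'.im - w.im : ℝ) : ℂ) • F w := by
      rw [intervalIntegral.integral_const]
      simp
    have heq : g w' - g w - (w' - w) • F w =
        (∫ x : ℝ in w.re..w'.re, (F ((x : ℂ) + (w.im : ℂ) * I) - F w)) +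
          I * ∫ y : ℝ in w.im..w'.im, (F ((w'.re : ℂ) + (y : ℂ) * I) - F w) := by
      rw [hident, hsplit, intervalIntegral.integral_sub (hintH _ _ _ hw1.le hre' hw2.le)
        intervalIntegrable_const, intervalIntegral.integral_sub (hintV _ _ _ hw2.le him' hre')
        intervalIntegrable_const, hc1, hc2]
      ring
    rw [heq]
    have b1 : ‖∫ x : ℝ in w.re..w'.re, (F ((x : ℂ) + (w.im : ℂ) * I) - F w)‖ ≤
        c / 2 * |w'.re - w.re| := by
      apply intervalIntegral.norm_integral_le_of_norm_le_const
      intro x hx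
      apply hclose
      have hxx : |x - w.re| ≤ |w'.re - w.re| :=
        abs_sub_le_of_uIcc (by simp) le_rfl (Set.uIoc_subset_uIcc hx)
      have hrw : (x : ℂ) + (w.im : ℂ) * I - w = ((x - w.re : ℝ) : ℂ) := by
        simp [Complex.ext_iff]
      rw [hrw, Complex.norm_real, Real.norm_eq_abs]
      have habs : (0 : ℝ) ≤ ‖w' - w‖ := norm_nonneg _
      linarith [hre1.trans (le_refl _), hxx.trans hre1]
    have b2 : ‖∫ y : ℝ in w.im..w'.im, (F ((w'.re : ℂ) + (y : ℂ) * I) - F w)‖ ≤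
        c / 2 * |w'.im - w.im| := by
      apply intervalIntegral.norm_integral_le_of_norm_le_const
      intro y hy
      apply hclose
      have hyy : |y - w.im| ≤ |w'.im - w.im| :=
        abs_sub_le_of_uIcc (by simp) le_rfl (Set.uIoc_subset_uIcc hy)
      calc ‖(w'.re : ℂ) + (y : ℂ) * I - w‖
          ≤ |((w'.re : ℂ) + (y : ℂ) * I - w).re| + |((w'.re : ℂ) + (y : ℂ) * I - w).im| :=
            Complex.norm_le_abs_re_add_abs_im _
        _ = |w'.re - w.re| + |y - w.im| := by simp
        _ ≤ ‖w' - w‖ + ‖w' - w‖ := add_le_add hre1 (hyy.trans him1)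
        _ = 2 * ‖w' - w‖ := by ring
    calc ‖(∫ x : ℝ in w.re..w'.re, (F ((x : ℂ) + (w.im : ℂ) * I) - F w)) +
          I * ∫ y : ℝ in w.im..w'.im, (F ((w'.re : ℂ) + (y : ℂ) * I) - F w)‖
        ≤ ‖∫ x : ℝ in w.re..w'.re, (F ((x : ℂ) + (w.im : ℂ) * I) - F w)‖ +
          ‖I * ∫ y : ℝ in w.im..w'.im, (F ((w'.re : ℂ) + (y : ℂ) * I) - F w)‖ := norm_add_le _ _
      _ = ‖∫ x : ℝ in w.re..w'.re, (F ((x : ℂ) + (w.im : ℂ) * I) - F w)‖ +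
          ‖∫ y : ℝ in w.im..w'.im, (F ((w'.re : ℂ) + (y : ℂ) * I) - F w)‖ := by
            rw [norm_mul, Complex.norm_I, one_mul]
      _ ≤ c / 2 * |w'.re - w.re| + c / 2 * |w'.im - w.im| := add_le_add b1 b2
      _ ≤ c / 2 * ‖w' - w‖ + c / 2 * ‖w' - w‖ := by
            exact add_le_add (by nlinarith [hre1]) (by nlinarith [him1])
      _ = c * ‖w' - w‖ := by ring
  -- wrap-up: g is holomorphic on the open square, its derivative is F
  set S : Set ℂ := {w : ℂ | |w.re - x₀| < δ ∧ |w.im - y₀| < δ} with hSdef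
  have hS : IsOpen S := by
    have h1 : Continuous fun w : ℂ => |w.re - x₀| :=
      (Complex.continuous_re.sub continuous_const).abs
    have h2 : Continuous fun w : ℂ => |w.im - y₀| :=
      (Complex.continuous_im.sub continuous_const).abs
    exact (isOpen_lt h1 continuous_const).inter (isOpen_lt h2 continuous_const)
  have hz₀S : z₀ ∈ S := by
    constructor <;> simp [hδ, hx₀, hy₀]
  have hgdiff : DifferentiableOn ℂ g S := fun w hw =>
    ((key w hw.1 hw.2).differentiableAt).differentiableWithinAt
  have hganal : AnalyticOnNhd ℂ g S := hgdiff.analyticOnNhd hS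
  have hder : DifferentiableAt ℂ (deriv g) z₀ :=
    ((hganal.deriv z₀ hz₀S).differentiableAt)
  have hFd : DifferentiableAt ℂ F z₀ := by
    refine hder.congr_of_eventuallyEq ?_
    filter_upwards [hS.mem_nhds hz₀S] with w hw
    exact ((key w hw.1 hw.2).deriv).symm
  exact hFd.differentiableWithinAt
lemma hasDerivAt_conj_conj {f : ℂ → ℂ} {d z : ℂ}
    (h : HasDerivAt f d ((starRingEnd ℂ) z)) :
    HasDerivAt (fun w => (starRingEnd ℂ) (f ((starRingEnd ℂ) w))) ((starRingEnd ℂ) d) z := by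
  rw [hasDerivAt_iff_tendsto_slope] at h ⊢
  have hconj : Filter.Tendsto (starRingEnd ℂ) (nhdsWithin z {z}ᶜ)
      (nhdsWithin ((starRingEnd ℂ) z) {(starRingEnd ℂ) z}ᶜ) := by
    refine tendsto_nhdsWithin_iff.mpr
      ⟨(Complex.continuous_conj.tendsto z).mono_left nhdsWithin_le_nhds, ?_⟩
    filter_upwards [self_mem_nhdsWithin] with w hw
    exact fun hh => hw (star_injective hh)
  have htend : Filter.Tendsto
      (fun w => (starRingEnd ℂ) (slope f ((starRingEnd ℂ) z) ((starRingEnd ℂ) w)))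
      (nhdsWithin z {z}ᶜ) (nhds ((starRingEnd ℂ) d)) :=
    (Complex.continuous_conj.tendsto d).comp (h.comp hconj)
  refine htend.congr fun w => ?_
  simp only [slope_def_field, map_div₀, map_sub, Complex.conj_conj]
set_option maxHeartbeats 1000000 in
/-- Schwarz reflection across the unit circle of a conformal map
`f` of the closed upper half-disk onto `D̄` sending `(-1,1)` to the open arc
`A°` extends `f` to a holomorphic injective map `F` of the unit disk onto
`D ∪ A° ∪ ι(D)`. -/
theorem stmt_2 (θ₀ θ₁ : ℝ) (hθ : θ₀ < θ₁) (hθ' : θ₁ < θ₀ + 2 * π)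
    (D : Set ℂ) (hne : D.Nonempty) (hopen : IsOpen D) (hconv : Convex ℝ D)
    (hsub : D ⊆
      {z : ℂ | ∃ r θ : ℝ, 0 < r ∧ θ₀ < θ ∧ θ < θ₁ ∧ z = r * Complex.exp (θ * Complex.I)} ∩
      {z : ℂ | ‖z‖ < 1})
    (hA : {z : ℂ | ∃ θ : ℝ, θ₀ ≤ θ ∧ θ ≤ θ₁ ∧ z = Complex.exp (θ * Complex.I)} ⊆ frontier D)
    (f : ℂ → ℂ)
    (hf_cont : ContinuousOn f (closure {z : ℂ | ‖z‖ < 1 ∧ 0 < z.im}))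
    (hf_holo : DifferentiableOn ℂ f {z : ℂ | ‖z‖ < 1 ∧ 0 < z.im})
    (hf_inj : Set.InjOn f {z : ℂ | ‖z‖ < 1 ∧ 0 < z.im})
    (hf_img : f '' {z : ℂ | ‖z‖ < 1 ∧ 0 < z.im} = D)
    (hf_arc : f '' ((fun x : ℝ => (x : ℂ)) '' Set.Ioo (-1 : ℝ) 1) =
      {z : ℂ | ∃ θ : ℝ, θ₀ < θ ∧ θ < θ₁ ∧ z = Complex.exp (θ * Complex.I)})
    (hf_circ : f '' ((fun x : ℝ => (x : ℂ)) '' Set.Icc (-1 : ℝ) 1) ⊆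
      {z : ℂ | ‖z‖ = 1})
    (F : ℂ → ℂ)
    (hF : ∀ z : ℂ, F z = if 0 ≤ z.im then f z
      else (starRingEnd ℂ (f (starRingEnd ℂ z)))⁻¹) :
    DifferentiableOn ℂ F {z : ℂ | ‖z‖ < 1} ∧
      Set.InjOn F {z : ℂ | ‖z‖ < 1} ∧
      Set.EqOn F f ({z : ℂ | ‖z‖ < 1 ∧ 0 < z.im} ∪
        (fun x : ℝ => (x : ℂ)) '' Set.Ioo (-1 : ℝ) 1) ∧
      F '' {z : ℂ | ‖z‖ < 1} =
        D ∪ {z : ℂ | ∃ θ : ℝ, θ₀ < θ ∧ θ < θ₁ ∧ z = Complex.exp (θ * Complex.I)} ∪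
          (fun z : ℂ => (starRingEnd ℂ z)⁻¹) '' D := by
  have hUo : IsOpen {z : ℂ | ‖z‖ < 1} :=
    isOpen_lt continuous_norm continuous_const
  have hUpo : IsOpen {z : ℂ | ‖z‖ < 1 ∧ 0 < z.im} :=
    hUo.inter (isOpen_lt continuous_const Complex.continuous_im)
  have hUno : IsOpen {z : ℂ | ‖z‖ < 1 ∧ z.im < 0} :=
    hUo.inter (isOpen_lt Complex.continuous_im continuous_const)
  -- the closed upper half-disk (intersected with the open disk) is inside the closure
  have hclos : {z : ℂ | ‖z‖ < 1 ∧ 0 ≤ z.im} ⊆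
      closure {z : ℂ | ‖z‖ < 1 ∧ 0 < z.im} := by
    rintro z ⟨h1, h2⟩
    have hcont : Continuous fun t : ℝ => z + t • (I / 2 - z) :=
      continuous_const.add (continuous_id.smul continuous_const)
    have htend : Filter.Tendsto (fun t : ℝ => z + t • (I / 2 - z))
        (nhdsWithin 0 (Set.Ioi 0)) (nhds z) := by
      have h0 := hcont.tendsto 0
      simp only [zero_smul, add_zero] at h0
      exact h0.mono_left nhdsWithin_le_nhds
    refine mem_closure_of_tendsto htend ?_
    filter_upwards [Ioo_mem_nhdsGT_of_mem (Set.left_mem_Ico.mpr one_pos)] with t ht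
    have key : z + t • (I / 2 - z) = (1 - t) • z + t • (I / 2) := by module
    constructor
    · show ‖_‖ < 1
      rw [key]
      calc ‖(1 - t) • z + t • (I / 2)‖ ≤ ‖(1 - t) • z‖ + ‖t • (I / 2)‖ := norm_add_le _ _
        _ = |1 - t| * ‖z‖ + |t| * ‖I / 2‖ := by rw [norm_smul, norm_smul]; simp
        _ = (1 - t) * ‖z‖ + t * (1 / 2) := by
            rw [_root_.abs_of_nonneg (by linarith [ht.2] : (0:ℝ) ≤ 1 - t),
              _root_.abs_of_pos ht.1]
            norm_num
        _ < 1 := by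
            have hz1 : ‖z‖ < 1 := h1
            nlinarith [ht.1, ht.2, norm_nonneg z]
    · show 0 < (z + t • (I / 2 - z)).im
      rw [key]
      have hsim : ((1 - t) • z + t • (I / 2)).im = (1 - t) * z.im + t * (1 / 2) := by
        rw [Complex.add_im, Complex.smul_im, Complex.smul_im]
        norm_num
      rw [hsim]
      nlinarith [ht.1, ht.2, h2]
  have hfUp : ∀ z : ℂ, ‖z‖ < 1 → 0 < z.im → f z ∈ D := by
    intro z h1 h2
    rw [← hf_img]; exact ⟨z, ⟨h1, h2⟩, rfl⟩
  have hreal : ∀ z : ℂ, ‖z‖ < 1 → z.im = 0 →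
      z ∈ (fun x : ℝ => (x : ℂ)) '' Set.Ioo (-1 : ℝ) 1 := by
    intro z h1 h2
    refine ⟨z.re, ?_, ?_⟩
    · have hre : ‖z‖ = |z.re| := by
        rw [← Real.norm_eq_abs, ← Complex.norm_real]
        congr 1
        rw [Complex.ext_iff]
        simp [h2]
      rw [hre] at h1
      exact Set.mem_Ioo.mpr (abs_lt.mp h1)
    · show ((z.re : ℝ) : ℂ) = z
      rw [Complex.ext_iff]
      simp [h2]
  have hfreal : ∀ z : ℂ, ‖z‖ < 1 → z.im = 0 →
      f z ∈ {w : ℂ | ∃ θ : ℝ, θ₀ < θ ∧ θ < θ₁ ∧ w = Complex.exp (θ * Complex.I)} := by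
    intro z h1 h2
    rw [← hf_arc]
    exact ⟨z, hreal z h1 h2, rfl⟩
  have harcabs : ∀ w ∈ {w : ℂ | ∃ θ : ℝ, θ₀ < θ ∧ θ < θ₁ ∧ w = Complex.exp (θ * Complex.I)},
      ‖w‖ = 1 := by
    rintro w ⟨θ, _, _, rfl⟩
    exact Complex.norm_exp_ofReal_mul_I θ
  have hD0 : ∀ w ∈ D, w ≠ 0 := by
    intro w hw h0
    obtain ⟨⟨r, θ, hr, _, _, hzeq⟩, _⟩ := hsub hw
    rw [h0] at hzeq
    exact (mul_ne_zero (Complex.ofReal_ne_zero.mpr hr.ne') (Complex.exp_ne_zero _)) hzeq.symm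
  have hDabs : ∀ w ∈ D, ‖w‖ < 1 := fun w hw => (hsub hw).2
  have hιabs : ∀ w ∈ D, 1 < ‖(starRingEnd ℂ w)⁻¹‖ := by
    intro w hw
    rw [norm_inv, Complex.norm_conj]
    have h0 : 0 < ‖w‖ := norm_pos_iff.mpr (hD0 w hw)
    exact (one_lt_inv₀ h0).mpr (hDabs w hw)
  have hconjUp : ∀ z : ℂ, ‖z‖ < 1 → z.im < 0 →
      (starRingEnd ℂ) z ∈ {w : ℂ | ‖w‖ < 1 ∧ 0 < w.im} := by
    intro z h1 h2
    refine ⟨by rwa [Complex.norm_conj], ?_⟩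
    rw [Complex.conj_im]
    linarith
  have hinv1 : ∀ w : ℂ, ‖w‖ = 1 → ((starRingEnd ℂ) w)⁻¹ = w := by
    intro w hw
    refine inv_eq_of_mul_eq_one_right ?_
    rw [mul_comm, Complex.mul_conj, Complex.normSq_eq_norm_sq, hw]
    norm_num
  -- value classification
  have hFup : ∀ z : ℂ, ‖z‖ < 1 → 0 < z.im → F z ∈ D := by
    intro z h1 h2
    rw [hF z, if_pos h2.le]
    exact hfUp z h1 h2
  have hFre : ∀ z : ℂ, ‖z‖ < 1 → z.im = 0 →
      F z ∈ {w : ℂ | ∃ θ : ℝ, θ₀ < θ ∧ θ < θ₁ ∧ w = Complex.exp (θ * Complex.I)} := by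
    intro z h1 h2
    rw [hF z, if_pos h2.ge]
    exact hfreal z h1 h2
  have hFdn : ∀ z : ℂ, ‖z‖ < 1 → z.im < 0 →
      F z ∈ (fun w : ℂ => ((starRingEnd ℂ) w)⁻¹) '' D := by
    intro z h1 h2
    rw [hF z, if_neg (not_le.mpr h2)]
    exact ⟨f ((starRingEnd ℂ) z), hfUp _ (hconjUp z h1 h2).1 (hconjUp z h1 h2).2, rfl⟩
  -- abs classification of values
  have hv1 : ∀ z : ℂ, ‖z‖ < 1 → 0 < z.im → ‖F z‖ < 1 :=
    fun z h1 h2 => hDabs _ (hFup z h1 h2)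
  have hv2 : ∀ z : ℂ, ‖z‖ < 1 → z.im = 0 → ‖F z‖ = 1 :=
    fun z h1 h2 => harcabs _ (hFre z h1 h2)
  have hv3 : ∀ z : ℂ, ‖z‖ < 1 → z.im < 0 → 1 < ‖F z‖ := by
    intro z h1 h2
    obtain ⟨v, hv, hveq⟩ := hFdn z h1 h2
    rw [← hveq]
    exact hιabs v hv
  -- continuity
  have hcont_cl : ContinuousOn f {z : ℂ | ‖z‖ < 1 ∧ 0 ≤ z.im} :=
    hf_cont.mono hclos
  have hfne : ∀ z : ℂ, ‖z‖ < 1 → 0 ≤ z.im → f z ≠ 0 := by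
    intro z h1 h2
    rcases h2.lt_or_eq with h | h
    · exact hD0 _ (hfUp z h1 h)
    · intro h0
      have := harcabs _ (hfreal z h1 h.symm)
      rw [h0] at this
      simp at this
  have hgcont : ContinuousOn (fun z => ((starRingEnd ℂ) (f ((starRingEnd ℂ) z)))⁻¹)
      {z : ℂ | ‖z‖ < 1 ∧ z.im ≤ 0} := by
    apply ContinuousOn.inv₀
    · apply Complex.continuous_conj.comp_continuousOn
      apply hcont_cl.comp Complex.continuous_conj.continuousOn
      intro z hz
      refine ⟨by rw [Complex.norm_conj]; exact hz.1, ?_⟩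
      rw [Complex.conj_im]
      linarith [hz.2]
    · intro z hz
      simp only [ne_eq, map_eq_zero]
      refine hfne _ (by rw [Complex.norm_conj]; exact hz.1) ?_
      rw [Complex.conj_im]
      linarith [hz.2]
  have hFcont : ContinuousOn F {z : ℂ | ‖z‖ < 1} := by
    intro z hz
    rcases lt_trichotomy z.im 0 with h | h | h
    · have hmem : {w : ℂ | ‖w‖ < 1 ∧ w.im ≤ 0} ∈ nhds z :=
        Filter.mem_of_superset (hUno.mem_nhds ⟨hz, h⟩) (fun w hw => ⟨hw.1, hw.2.le⟩)
      have hgA : ContinuousAt (fun w => ((starRingEnd ℂ) (f ((starRingEnd ℂ) w)))⁻¹) z :=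
        hgcont.continuousAt hmem
      refine (hgA.congr ?_).continuousWithinAt
      filter_upwards [hUno.mem_nhds ⟨hz, h⟩] with w hw
      rw [hF w, if_neg (not_le.mpr hw.2)]
    · have h₁ : ContinuousWithinAt F {w : ℂ | ‖w‖ < 1 ∧ 0 ≤ w.im} z := by
        refine ((hcont_cl z ⟨hz, h.ge⟩).congr ?_ ?_)
        · intro y hy
          rw [hF y, if_pos hy.2]
        · rw [hF z, if_pos h.ge]
      have h₂ : ContinuousWithinAt F {w : ℂ | ‖w‖ < 1 ∧ w.im ≤ 0} z := by
        have heqg : ∀ y : ℂ, ‖y‖ < 1 → y.im ≤ 0 →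
            F y = ((starRingEnd ℂ) (f ((starRingEnd ℂ) y)))⁻¹ := by
          intro y hy1 hy2
          rcases hy2.lt_or_eq with hlt | heq
          · rw [hF y, if_neg (not_le.mpr hlt)]
          · rw [hF y, if_pos heq.ge]
            have hconjy : (starRingEnd ℂ) y = y := Complex.conj_eq_iff_im.mpr heq
            rw [hconjy, hinv1 (f y) (harcabs _ (hfreal y hy1 heq))]
        refine ((hgcont z ⟨hz, h.le⟩).congr ?_ ?_)
        · intro y hy
          exact heqg y hy.1 hy.2
        · exact heqg z hz h.le
      have hu := h₁.union h₂
      refine hu.mono ?_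
      intro w hw
      rcases le_total 0 w.im with hw' | hw'
      · exact Or.inl ⟨hw, hw'⟩
      · exact Or.inr ⟨hw, hw'⟩
    · have hmem : {w : ℂ | ‖w‖ < 1 ∧ 0 ≤ w.im} ∈ nhds z :=
        Filter.mem_of_superset (hUpo.mem_nhds ⟨hz, h⟩) (fun w hw => ⟨hw.1, hw.2.le⟩)
      have hfA : ContinuousAt f z := hcont_cl.continuousAt hmem
      refine (hfA.congr ?_).continuousWithinAt
      filter_upwards [hUpo.mem_nhds ⟨hz, h⟩] with w hw
      rw [hF w, if_pos hw.2.le]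
  -- differentiability
  have hFdiff : DifferentiableOn ℂ F {z : ℂ | ‖z‖ < 1} := by
    apply morera_line hUo hFcont
    intro z hz him
    rcases him.lt_or_gt with h | h
    · have hzUp := hconjUp z hz h
      have hfd : DifferentiableAt ℂ f ((starRingEnd ℂ) z) :=
        hf_holo.differentiableAt (hUpo.mem_nhds hzUp)
      have h1 : DifferentiableAt ℂ (fun w => (starRingEnd ℂ) (f ((starRingEnd ℂ) w))) z :=
        (hasDerivAt_conj_conj hfd.hasDerivAt).differentiableAt
      have h2 : DifferentiableAt ℂ (fun w => ((starRingEnd ℂ) (f ((starRingEnd ℂ) w)))⁻¹) z := by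
        apply h1.inv
        simp only [ne_eq, map_eq_zero]
        exact hD0 _ (hfUp _ hzUp.1 hzUp.2)
      refine h2.congr_of_eventuallyEq ?_
      filter_upwards [hUno.mem_nhds ⟨hz, h⟩] with w hw
      rw [hF w, if_neg (not_le.mpr hw.2)]
    · have hfd : DifferentiableAt ℂ f z := hf_holo.differentiableAt (hUpo.mem_nhds ⟨hz, h⟩)
      refine hfd.congr_of_eventuallyEq ?_
      filter_upwards [hUpo.mem_nhds ⟨hz, h⟩] with w hw
      rw [hF w, if_pos hw.2.le]
  -- EqOn
  have hEqOn : Set.EqOn F f ({z : ℂ | ‖z‖ < 1 ∧ 0 < z.im} ∪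
      (fun x : ℝ => (x : ℂ)) '' Set.Ioo (-1 : ℝ) 1) := by
    rintro z (⟨h1, h2⟩ | ⟨x, hx, rfl⟩)
    · rw [hF z, if_pos h2.le]
    · rw [hF _, if_pos (by simp : (0:ℝ) ≤ ((x : ℂ)).im)]
  -- image
  have hImg : F '' {z : ℂ | ‖z‖ < 1} =
      D ∪ {z : ℂ | ∃ θ : ℝ, θ₀ < θ ∧ θ < θ₁ ∧ z = Complex.exp (θ * Complex.I)} ∪
        (fun z : ℂ => (starRingEnd ℂ z)⁻¹) '' D := by
    apply Set.Subset.antisymm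
    · rintro w ⟨z, hz, rfl⟩
      rcases lt_trichotomy z.im 0 with h | h | h
      · exact Or.inr (hFdn z hz h)
      · exact Or.inl (Or.inr (hFre z hz h))
      · exact Or.inl (Or.inl (hFup z hz h))
    · rintro w ((hw | hw) | ⟨v, hv, rfl⟩)
      · rw [← hf_img] at hw
        obtain ⟨z, hzUp, rfl⟩ := hw
        exact ⟨z, hzUp.1, by rw [hF z, if_pos hzUp.2.le]⟩
      · rw [← hf_arc] at hw
        obtain ⟨z, ⟨x, hx, rfl⟩, rfl⟩ := hw
        refine ⟨(x : ℂ), ?_, ?_⟩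
        · show ‖_‖ < 1
          rw [Complex.norm_real, Real.norm_eq_abs]
          exact abs_lt.mpr ⟨hx.1, hx.2⟩
        · rw [hF _, if_pos (by simp : (0:ℝ) ≤ ((x : ℂ)).im)]
      · rw [← hf_img] at hv
        obtain ⟨z, hzUp, rfl⟩ := hv
        refine ⟨(starRingEnd ℂ) z, ?_, ?_⟩
        · show ‖_‖ < 1
          rw [Complex.norm_conj]
          exact hzUp.1
        · have him : ((starRingEnd ℂ) z).im < 0 := by
            rw [Complex.conj_im]
            linarith [hzUp.2]
          rw [hF _, if_neg (not_le.mpr him), Complex.conj_conj]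
  refine ⟨hFdiff, ?_, hEqOn, hImg⟩
  -- injectivity
  have habs_ne : ∀ c d : ℂ, ‖c‖ < 1 → ‖d‖ < 1 → c.im < 0 → 0 ≤ d.im →
      F c ≠ F d := by
    intro c d hc hd hc' hd' heq
    have h1 : 1 < ‖F c‖ := hv3 c hc hc'
    rcases hd'.lt_or_eq with h | h
    · have h2 : ‖F d‖ < 1 := hv1 d hd h
      rw [heq] at h1
      linarith
    · have h2 : ‖F d‖ = 1 := hv2 d hd h.symm
      rw [heq, h2] at h1
      exact lt_irrefl 1 h1
  have habs_ne2 : ∀ c d : ℂ, ‖c‖ < 1 → ‖d‖ < 1 → c.im = 0 → 0 < d.im →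
      F c ≠ F d := by
    intro c d hc hd hc' hd' heq
    have h1 : ‖F c‖ = 1 := hv2 c hc hc'
    have h2 : ‖F d‖ < 1 := hv1 d hd hd'
    rw [← heq, h1] at h2
    exact lt_irrefl 1 h2
  intro a ha b hb hab
  have ha1 : ‖a‖ < 1 := ha
  have hb1 : ‖b‖ < 1 := hb
  rcases lt_trichotomy a.im 0 with ha' | ha' | ha'
  · rcases lt_trichotomy b.im 0 with hb' | hb' | hb'
    · -- both lower
      rw [hF a, if_neg (not_le.mpr ha'), hF b, if_neg (not_le.mpr hb')] at hab
      have h1 : (starRingEnd ℂ) (f ((starRingEnd ℂ) a)) =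
          (starRingEnd ℂ) (f ((starRingEnd ℂ) b)) := inv_injective hab
      have h2 : f ((starRingEnd ℂ) a) = f ((starRingEnd ℂ) b) := star_injective h1
      exact star_injective (hf_inj (hconjUp a ha1 ha') (hconjUp b hb1 hb') h2)
    · exact absurd hab (habs_ne a b ha1 hb1 ha' hb'.ge)
    · exact absurd hab (habs_ne a b ha1 hb1 ha' hb'.le)
  · rcases lt_trichotomy b.im 0 with hb' | hb' | hb'
    · exact absurd hab.symm (habs_ne b a hb1 ha1 hb' ha'.ge)
    · -- both on the real axis: open mapping argument
      by_contra hne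
      obtain ⟨θ, hθa, hθb, hθe⟩ := hFre a ha1 ha'
      have hwcl : F a ∈ closure D :=
        frontier_subset_closure (hA ⟨θ, hθa.le, hθb.le, hθe⟩)
      have hmap : ∀ c : ℂ, ‖c‖ < 1 → c.im = 0 →
          nhds (F c) ≤ Filter.map F (nhds c) := by
        intro c hc hc0
        have hana : AnalyticAt ℂ F c := hFdiff.analyticAt (hUo.mem_nhds hc)
        rcases hana.eventually_constant_or_nhds_le_map_nhds with hconst | hle
        · exfalso
          obtain ⟨ε₁, hε₁, hball⟩ := Metric.eventually_nhds_iff.mp hconst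
          obtain ⟨ε₂, hε₂, hball₂⟩ := Metric.isOpen_iff.mp hUo c hc
          have ht : 0 < min ε₁ ε₂ / 2 := by positivity
          set t := min ε₁ ε₂ / 2 with htdef
          have hdist : dist (c + (t : ℂ) * I) c < min ε₁ ε₂ := by
            rw [Complex.dist_eq, add_sub_cancel_left]
            rw [norm_mul, Complex.norm_I, Complex.norm_real, Real.norm_eq_abs, mul_one,
              _root_.abs_of_pos ht]
            have : 0 < min ε₁ ε₂ := lt_min hε₁ hε₂
            linarith
          have hpabs : ‖c + (t : ℂ) * I‖ < 1 :=
            hball₂ (Metric.mem_ball.mpr (lt_of_lt_of_le hdist (min_le_right _ _)))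
          have hpim : 0 < (c + (t : ℂ) * I).im := by
            simp [hc0, ht]
          have h1 : ‖F (c + (t : ℂ) * I)‖ < 1 := hv1 _ hpabs hpim
          have h2 : F (c + (t : ℂ) * I) = F c :=
            hball (lt_of_lt_of_le hdist (min_le_left _ _))
          rw [h2, hv2 c hc hc0] at h1
          exact lt_irrefl 1 h1
        · exact hle
      obtain ⟨r₁, hr₁, hball₁⟩ := Metric.isOpen_iff.mp hUo a ha
      obtain ⟨r₂, hr₂, hball₂⟩ := Metric.isOpen_iff.mp hUo b hb
      have hdab : 0 < dist a b := dist_pos.mpr hne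
      have hrpos : 0 < min (min r₁ r₂) (dist a b / 2) :=
        lt_min (lt_min hr₁ hr₂) (by positivity)
      set r := min (min r₁ r₂) (dist a b / 2) with hrdef
      have hna : F '' Metric.ball a r ∈ nhds (F a) :=
        hmap a ha1 ha' (Filter.image_mem_map (Metric.ball_mem_nhds a hrpos))
      have hnb : F '' Metric.ball b r ∈ nhds (F a) := by
        rw [hab]
        exact hmap b hb1 hb' (Filter.image_mem_map (Metric.ball_mem_nhds b hrpos))
      obtain ⟨v, ⟨hv1', hv2'⟩, hvD⟩ :=
        mem_closure_iff_nhds.mp hwcl _ (Filter.inter_mem hna hnb)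
      obtain ⟨z₁, hz₁, hz₁v⟩ := hv1'
      obtain ⟨z₂, hz₂, hz₂v⟩ := hv2'
      have hz₁U : ‖z₁‖ < 1 :=
        hball₁ (Metric.ball_subset_ball ((min_le_left _ _).trans (min_le_left _ _)) hz₁)
      have hz₂U : ‖z₂‖ < 1 :=
        hball₂ (Metric.ball_subset_ball ((min_le_left _ _).trans (min_le_right _ _)) hz₂)
      have hvabs : ‖v‖ < 1 := hDabs v hvD
      have him : ∀ z : ℂ, ‖z‖ < 1 → F z = v → 0 < z.im := by
        intro z hzU hzv
        rcases lt_trichotomy z.im 0 with h | h | h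
        · have := hv3 z hzU h
          rw [hzv] at this
          linarith
        · have := hv2 z hzU h
          rw [hzv] at this
          linarith
        · exact h
      have him₁ := him z₁ hz₁U hz₁v
      have him₂ := him z₂ hz₂U hz₂v
      have hfeq : f z₁ = f z₂ := by
        have e₁ : F z₁ = f z₁ := by rw [hF z₁, if_pos him₁.le]
        have e₂ : F z₂ = f z₂ := by rw [hF z₂, if_pos him₂.le]
        rw [← e₁, ← e₂, hz₁v, hz₂v]
      have hz12 : z₁ = z₂ := hf_inj ⟨hz₁U, him₁⟩ ⟨hz₂U, him₂⟩ hfeq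
      have hd₁ : dist z₁ a < r := Metric.mem_ball.mp hz₁
      have hd₂ : dist z₂ b < r := Metric.mem_ball.mp hz₂
      have hrle : r ≤ dist a b / 2 := min_le_right _ _
      have htri : dist a b ≤ dist a z₁ + dist z₁ b := dist_triangle a z₁ b
      rw [hz12] at hd₁ htri
      rw [dist_comm a z₂] at htri
      linarith
    · exact absurd hab (habs_ne2 a b ha1 hb1 ha' hb')
  · rcases lt_trichotomy b.im 0 with hb' | hb' | hb'
    · exact absurd hab.symm (habs_ne b a hb1 ha1 hb' ha'.le)
    · exact absurd hab.symm (habs_ne2 b a hb1 ha1 hb' ha')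
    · rw [hF a, if_pos ha'.le, hF b, if_pos hb'.le] at hab
      exact hf_inj ⟨ha1, ha'⟩ ⟨hb1, hb'⟩ hab
end

section
/- Let f be holomorphic on the open unit disk U = {z ∈ ℂ : |z| < 1} with f′(z) ≠ 0 for all z ∈ U, and suppose that Re(1 + z·f″(z)/f′(z)) > 0 for all z ∈ U. Then for every fixed θ ∈ [0, 2π), the function r ↦ r·|f′(r e^{iθ})| is strictly increasing on (0, 1). -/
open Complex Set Real

/-- If `f` is holomorphic on the unit disk with nonvanishing
derivative and `Re(1 + z f″(z)/f′(z)) > 0` on the disk, then for each fixed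
`θ ∈ [0, 2π)` the function `r ↦ r * |f′(r e^{iθ})|` is strictly increasing
on `(0, 1)`. -/
theorem stmt_4 (f : ℂ → ℂ)
    (hf_holo : DifferentiableOn ℂ f {z : ℂ | ‖z‖ < 1})
    (hf_deriv : ∀ z : ℂ, ‖z‖ < 1 → deriv f z ≠ 0)
    (hf_re : ∀ z : ℂ, ‖z‖ < 1 →
      0 < (1 + z * deriv (deriv f) z / deriv f z).re)
    (θ : ℝ) (hθ : θ ∈ Set.Ico 0 (2 * π)) :
    StrictMonoOn (fun r : ℝ =>
      r * ‖deriv f ((r : ℂ) * Complex.exp (θ * Complex.I))‖)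
      (Set.Ioo (0 : ℝ) 1) := by
  set c : ℂ := Complex.exp (θ * Complex.I) with hc
  have hc1 : ‖c‖ = 1 := by
    simp [hc, Complex.norm_exp]
  have hnc : Complex.normSq c = 1 := by
    rw [Complex.normSq_eq_norm_sq, hc1]; norm_num
  have hcc : c * (starRingEnd ℂ) c = 1 := by
    rw [Complex.mul_conj, hnc]; norm_num
  have hopen : IsOpen {z : ℂ | ‖z‖ < 1} :=
    isOpen_lt continuous_norm continuous_const
  have hA : AnalyticOnNhd ℂ f {z : ℂ | ‖z‖ < 1} :=
    hf_holo.analyticOnNhd hopen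
  have hAd : AnalyticOnNhd ℂ (deriv f) {z : ℂ | ‖z‖ < 1} := hA.deriv
  set g : ℝ → ℝ := fun r => Complex.normSq (((r : ℂ) * c) * deriv f ((r : ℂ) * c))
    with hgdef
  set ψ : ℝ → ℝ := fun r => Real.sqrt (g r) with hψdef
  -- key derivative fact
  have key : ∀ r ∈ Set.Ioo (0 : ℝ) 1, ∃ d', 0 < d' ∧ HasDerivAt ψ d' r := by
    intro r hr
    set z : ℂ := (r : ℂ) * c with hz
    have hzmem : ‖z‖ < 1 := by
      rw [hz, norm_mul, hc1, Complex.norm_real, Real.norm_eq_abs, abs_of_pos hr.1, mul_one]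
      exact hr.2
    have hz0 : z ≠ 0 := by
      intro h
      rw [h] at hzmem
      simp at hzmem
      have := hr.1
      rw [hz] at h
      have : (r : ℂ) = 0 ∨ c = 0 := mul_eq_zero.mp h
      rcases this with h' | h'
      · exact absurd (Complex.ofReal_eq_zero.mp h') (ne_of_gt hr.1)
      · rw [h'] at hc1; simp at hc1
    set A : ℂ := deriv f z with hAdef
    set B : ℂ := deriv (deriv f) z with hBdef
    have hA0 : A ≠ 0 := hf_deriv z hzmem
    have hf' : HasDerivAt f A z :=
      (hf_holo.differentiableAt (hopen.mem_nhds hzmem)).hasDerivAt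
    have hf'' : HasDerivAt (deriv f) B z :=
      ((hAd z hzmem).differentiableAt).hasDerivAt
    -- derivative of w ↦ w * deriv f w at z
    have hF : HasDerivAt (fun w : ℂ => w * deriv f w) (A + z * B) z := by
      have := (hasDerivAt_id' z).mul hf''
      simp only [one_mul] at this
      exact this
    have hmulc : HasDerivAt (fun w : ℂ => w * c) c (r : ℂ) := by
      simpa using (hasDerivAt_id ((r : ℂ))).mul_const c
    have hcomp : HasDerivAt (fun w : ℂ => (w * c) * deriv f (w * c))
        ((A + z * B) * c) (r : ℂ) := by
      have := hF.comp (r : ℂ) hmulc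
      simpa [hz, Function.comp_def] using this
    set d : ℂ := (A + z * B) * c with hddef
    have hG : HasDerivAt (fun t : ℝ => ((t : ℂ) * c) * deriv f ((t : ℂ) * c)) d r :=
      hcomp.comp_ofReal
    set w : ℂ := z * A with hwdef
    have hw0 : w ≠ 0 := mul_ne_zero hz0 hA0
    -- real and imaginary parts
    have hre : HasDerivAt (fun t : ℝ => (((t : ℂ) * c) * deriv f ((t : ℂ) * c)).re)
        d.re r := Complex.reCLM.hasFDerivAt.comp_hasDerivAt r hG
    have him : HasDerivAt (fun t : ℝ => (((t : ℂ) * c) * deriv f ((t : ℂ) * c)).im)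
        d.im r := Complex.imCLM.hasFDerivAt.comp_hasDerivAt r hG
    have hn : HasDerivAt g (2 * (w.re * d.re + w.im * d.im)) r := by
      have := (hre.mul hre).add (him.mul him)
      have heq : (fun t : ℝ => (((t : ℂ) * c) * deriv f ((t : ℂ) * c)).re *
          (((t : ℂ) * c) * deriv f ((t : ℂ) * c)).re +
          (((t : ℂ) * c) * deriv f ((t : ℂ) * c)).im *
          (((t : ℂ) * c) * deriv f ((t : ℂ) * c)).im) = g := by
        funext t; simp [hgdef, Complex.normSq_apply]
      rw [← heq]
      refine HasDerivAt.congr_deriv this ?_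
      simp [hwdef, hz]
      ring
    have hgpos : 0 < g r := by
      have : g r = Complex.normSq w := by simp [hgdef, hwdef, hz, hAdef]
      rw [this]
      exact Complex.normSq_pos.mpr hw0
    -- positivity of the numerator
    have hid : (starRingEnd ℂ) w * d = (r : ℂ) * ((starRingEnd ℂ) A * (A + z * B)) := by
      rw [hwdef, hddef, hz]
      simp only [map_mul, Complex.conj_ofReal]
      linear_combination ((r : ℂ) * (starRingEnd ℂ) A * A +
        (r : ℂ) ^ 2 * (starRingEnd ℂ) A * c * B) * hcc
    have hid2 : (starRingEnd ℂ) A * (A + z * B) =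
        (Complex.normSq A : ℂ) * (1 + z * B / A) := by
      rw [← Complex.mul_conj A]
      field_simp
    have hnum : 0 < w.re * d.re + w.im * d.im := by
      have h1 : w.re * d.re + w.im * d.im = ((starRingEnd ℂ) w * d).re := by
        simp [Complex.mul_re, Complex.conj_re, Complex.conj_im]
      rw [h1, hid, hid2]
      rw [Complex.re_ofReal_mul, Complex.re_ofReal_mul]
      have h2 : 0 < Complex.normSq A := Complex.normSq_pos.mpr hA0
      exact mul_pos hr.1 (mul_pos h2 (hf_re z hzmem))
    refine ⟨2 * (w.re * d.re + w.im * d.im) / (2 * Real.sqrt (g r)), ?_, ?_⟩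
    · apply div_pos (by linarith)
      positivity
    · exact hn.sqrt (ne_of_gt hgpos)
  -- strict monotonicity of ψ on Ioo 0 1
  have hψmono : StrictMonoOn ψ (Set.Ioo (0 : ℝ) 1) := by
    apply strictMonoOn_of_deriv_pos (convex_Ioo 0 1)
    · intro x hx
      obtain ⟨d', _, hd'⟩ := key x hx
      exact hd'.continuousAt.continuousWithinAt
    · intro x hx
      rw [interior_Ioo] at hx
      obtain ⟨d', hpos, hd'⟩ := key x hx
      rw [hd'.deriv]
      exact hpos
  -- transfer to the original function
  intro a ha b hb hab
  have h := hψmono ha hb hab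
  have heq : ∀ x ∈ Set.Ioo (0 : ℝ) 1,
      x * ‖deriv f ((x : ℂ) * c)‖ = ψ x := by
    intro x hx
    have : ψ x = ‖((x : ℂ) * c) * deriv f ((x : ℂ) * c)‖ :=
      (Complex.norm_def _).symm
    rw [this, norm_mul, norm_mul, hc1, Complex.norm_real, Real.norm_eq_abs, abs_of_pos hx.1, mul_one]
  simpa only [heq a ha, heq b hb] using h
end

section
/- Let α ∈ (0, π/2) and let D be an open convex subset of ℂ such that D ⊆ {r e^{iθ} : 0 < r < 1, α < θ < π − α} and {e^{iθ} : α ≤ θ ≤ π − α} ⊆ ∂D. Then U \ D is star-shaped with respect to the origin: for every z ∈ U \ D and every t ∈ [0, 1], the point t·z belongs to U \ D, where U = {z ∈ ℂ : |z| < 1} is the open unit disk. -/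
open Complex Set Real

/-- If `α ∈ (0, π/2)` and `D` is an open convex subset of `ℂ`
contained in the sector `{r e^{iθ} : 0 < r < 1, α < θ < π − α}` of the unit
disk whose frontier contains the arc `{e^{iθ} : α ≤ θ ≤ π − α}`, then
`U \ D` is star-shaped with respect to the origin. -/
theorem stmt_6 (α : ℝ) (hα : α ∈ Set.Ioo 0 (π / 2))
    (D : Set ℂ) (hopen : IsOpen D) (hconv : Convex ℝ D)
    (hsub : D ⊆ {z : ℂ | ∃ r θ : ℝ, 0 < r ∧ r < 1 ∧ α < θ ∧ θ < π - α ∧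
      z = r * Complex.exp (θ * Complex.I)})
    (harc : {z : ℂ | ∃ θ : ℝ, α ≤ θ ∧ θ ≤ π - α ∧ z = Complex.exp (θ * Complex.I)} ⊆
      frontier D) :
    ∀ z ∈ {z : ℂ | ‖z‖ < 1} \ D, ∀ t ∈ Set.Icc (0 : ℝ) 1,
      (t : ℂ) * z ∈ {z : ℂ | ‖z‖ < 1} \ D := by
  rintro z ⟨hz1, hz2⟩ t ⟨ht0, ht1⟩
  simp only [mem_setOf_eq] at hz1
  have habs : ‖(t : ℂ) * z‖ = t * ‖z‖ := by
    rw [norm_mul, Complex.norm_real, Real.norm_of_nonneg ht0]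
  constructor
  · simp only [mem_setOf_eq, habs]
    calc t * ‖z‖ ≤ 1 * ‖z‖ := by gcongr
      _ = ‖z‖ := one_mul _
      _ < 1 := hz1
  · intro hmem
    obtain ⟨r, θ, hr0, hr1, hθ1, hθ2, heq⟩ := hsub hmem
    set p : ℂ := Complex.exp (θ * Complex.I) with hp_def
    have hp : p ∈ closure D :=
      frontier_subset_closure (harc ⟨θ, hθ1.le, hθ2.le, rfl⟩)
    have habs_p : ‖p‖ = 1 := by
      exact Complex.norm_exp_ofReal_mul_I θ
    have ht1' : t < 1 := by
      rcases eq_or_lt_of_le ht1 with h | h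
      · exact absurd (by simpa [h] using hmem) hz2
      · exact h
    have hr : r = t * ‖z‖ := by
      have h := congrArg (‖·‖) heq
      rw [habs, norm_mul, Complex.norm_real, habs_p, Real.norm_of_nonneg hr0.le, mul_one] at h
      linarith
    have ht0' : 0 < t := by
      rcases eq_or_lt_of_le ht0 with h | h
      · exfalso; rw [← h] at hr; simp at hr; linarith
      · exact h
    have hrt : r < t := by
      calc r = t * ‖z‖ := hr
        _ < t * 1 := by gcongr
        _ = t := mul_one t
    set c := r / t with hc
    have hc1 : c < 1 := (div_lt_one ht0').mpr hrt
    have hcr : r < c := by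
      rw [hc, lt_div_iff₀ ht0']
      nlinarith
    have htne : (t : ℂ) ≠ 0 := by exact_mod_cast ht0'.ne'
    have hzp : z = (c : ℂ) * p := by
      rw [hc]
      push_cast
      field_simp
      linear_combination heq
    have key : ((1 - c) / (1 - r)) * r + (c - r) / (1 - r) = c := by
      have : (1 : ℝ) - r ≠ 0 := by linarith
      field_simp
      ring
    have keyC : (((1 - c) / (1 - r) : ℝ) : ℂ) * r + (((c - r) / (1 - r) : ℝ) : ℂ) = (c : ℂ) := by
      exact_mod_cast key
    have hseg : z ∈ openSegment ℝ ((t : ℂ) * z) p := by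
      refine ⟨(1 - c) / (1 - r), (c - r) / (1 - r), ?_, ?_, ?_, ?_⟩
      · apply div_pos <;> linarith
      · apply div_pos <;> linarith
      · have : (1 : ℝ) - r ≠ 0 := by linarith
        field_simp
        ring
      · rw [heq, hzp, Complex.real_smul, Complex.real_smul]
        linear_combination keyC * p
    have hz' : z ∈ interior D :=
      hconv.openSegment_interior_closure_subset_interior
        (by rwa [hopen.interior_eq]) hp hseg
    exact hz2 (hopen.interior_eq ▸ hz')
end

section
/- Let θ₀ < θ₁ < θ₀ + 2π be real numbers and let D be an open convex subset of ℂ with D ⊆ S ∩ U, A ⊆ ∂D, and 0 ∈ ∂D. Then D is exactly the open circular sector of the unit disk: D = S ∩ U = {r e^{iθ} : 0 < r < 1, θ₀ < θ < θ₁}. -/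
open Complex Set Real

private lemma exp_add_aux (α β : ℝ) :
    Complex.exp (((α + β : ℝ) : ℂ) * Complex.I)
      = Complex.exp ((α : ℝ) * Complex.I) *
        ((Real.cos β : ℂ) + (Real.sin β : ℂ) * Complex.I) := by
  rw [Complex.ofReal_add, add_mul, Complex.exp_add]
  congr 1
  rw [Complex.exp_mul_I, ← Complex.ofReal_cos, ← Complex.ofReal_sin]

set_option maxHeartbeats 1000000 in
/-- If `D` is an open convex subset of `ℂ` with `D ⊆ S ∩ U`,
`A ⊆ ∂D` and `0 ∈ ∂D`, then `D` is exactly the open circular sector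
`S ∩ U = {r e^{iθ} : 0 < r < 1, θ₀ < θ < θ₁}`. -/
theorem stmt_7 (θ₀ θ₁ : ℝ) (hθ : θ₀ < θ₁) (hθ' : θ₁ < θ₀ + 2 * π)
    (D : Set ℂ) (hopen : IsOpen D) (hconv : Convex ℝ D)
    (hsub : D ⊆
      {z : ℂ | ∃ r θ : ℝ, 0 < r ∧ θ₀ < θ ∧ θ < θ₁ ∧ z = r * Complex.exp (θ * Complex.I)} ∩
      {z : ℂ | ‖z‖ < 1})
    (hA : {z : ℂ | ∃ θ : ℝ, θ₀ ≤ θ ∧ θ ≤ θ₁ ∧ z = Complex.exp (θ * Complex.I)} ⊆ frontier D)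
    (h0 : (0 : ℂ) ∈ frontier D) :
    D = {z : ℂ | ∃ r θ : ℝ, 0 < r ∧ r < 1 ∧ θ₀ < θ ∧ θ < θ₁ ∧
      z = r * Complex.exp (θ * Complex.I)} := by
  have hDne : D.Nonempty := by
    by_contra h
    rw [not_nonempty_iff_eq_empty] at h
    have := frontier_subset_closure h0
    rw [h, closure_empty] at this
    exact this
  obtain ⟨x, hx⟩ := hDne
  have h0c : (0 : ℂ) ∈ closure D := frontier_subset_closure h0
  have harc : ∀ θ' : ℝ, θ₀ ≤ θ' → θ' ≤ θ₁ →
      Complex.exp ((θ' : ℝ) * Complex.I) ∈ closure D := fun θ' h1 h2 =>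
    frontier_subset_closure (hA ⟨θ', h1, h2, rfl⟩)
  ext z
  constructor
  · intro hz
    obtain ⟨⟨r, θ, hr, hθa, hθb, hzeq⟩, habs⟩ := hsub hz
    refine ⟨r, θ, hr, ?_, hθa, hθb, hzeq⟩
    simp only [Set.mem_setOf_eq] at habs
    rw [hzeq] at habs
    rwa [norm_mul, Complex.norm_exp_ofReal_mul_I, mul_one, Complex.norm_real,
      Real.norm_of_nonneg hr.le] at habs
  · rintro ⟨r, θ, hr0, hr1, hθa, hθb, rfl⟩
    have hpi : (0:ℝ) < π := Real.pi_pos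
    -- choose the half-angle δ
    set δ : ℝ := min (min (θ - θ₀) (θ₁ - θ)) (min (π/4) (Real.arccos ((r+1)/2))) with hδdef
    have harccos_pos : 0 < Real.arccos ((r+1)/2) := Real.arccos_pos.mpr (by linarith)
    have hδpos : 0 < δ := lt_min (lt_min (by linarith) (by linarith))
      (lt_min (by linarith) harccos_pos)
    have hδ1 : δ ≤ θ - θ₀ := le_trans (min_le_left _ _) (min_le_left _ _)
    have hδ2 : δ ≤ θ₁ - θ := le_trans (min_le_left _ _) (min_le_right _ _)
    have hδ3 : δ ≤ π/4 := le_trans (min_le_right _ _) (min_le_left _ _)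
    have hδ4 : δ ≤ Real.arccos ((r+1)/2) := le_trans (min_le_right _ _) (min_le_right _ _)
    have hcos : (r+1)/2 ≤ Real.cos δ := by
      have h1 : Real.cos (Real.arccos ((r+1)/2)) = (r+1)/2 :=
        Real.cos_arccos (by linarith) (by linarith)
      calc (r+1)/2 = Real.cos (Real.arccos ((r+1)/2)) := h1.symm
        _ ≤ Real.cos δ :=
          Real.cos_le_cos_of_nonneg_of_le_pi hδpos.le (Real.arccos_le_pi _) hδ4
    have hcosr : r < Real.cos δ := by linarith
    have hcospos : 0 < Real.cos δ := by linarith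
    have hsinpos : 0 < Real.sin δ := Real.sin_pos_of_pos_of_lt_pi hδpos (by linarith)
    set E : ℂ := Complex.exp ((θ : ℝ) * Complex.I) with hE
    set e1 : ℂ := Complex.exp (((θ - δ : ℝ) : ℂ) * Complex.I) with he1def
    set e2 : ℂ := Complex.exp (((θ + δ : ℝ) : ℂ) * Complex.I) with he2def
    have he1c : e1 ∈ closure D := harc _ (by linarith) (by linarith)
    have he2c : e2 ∈ closure D := harc _ (by linarith) (by linarith)
    have he1 : e1 = E * ((Real.cos δ : ℂ) - (Real.sin δ : ℂ) * Complex.I) := by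
      rw [he1def, show (θ - δ : ℝ) = θ + (-δ) by ring, exp_add_aux,
        Real.cos_neg, Real.sin_neg, hE]
      push_cast
      ring
    have he2 : e2 = E * ((Real.cos δ : ℂ) + (Real.sin δ : ℂ) * Complex.I) := by
      rw [he2def, exp_add_aux, hE]
    -- coordinates of x in the basis (e1, e2)
    set p : ℝ := (x * Complex.exp (((-θ : ℝ) : ℂ) * Complex.I)).re with hp
    set q : ℝ := (x * Complex.exp (((-θ : ℝ) : ℂ) * Complex.I)).im with hq
    have hxE : x = ((p : ℂ) + (q : ℂ) * Complex.I) * E := by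
      rw [hp, hq, Complex.re_add_im, mul_assoc, hE, ← Complex.exp_add,
        show ((-θ : ℝ) : ℂ) * Complex.I + (θ : ℝ) * Complex.I = 0 by push_cast; ring,
        Complex.exp_zero, mul_one]
    set u : ℝ := (p / Real.cos δ - q / Real.sin δ) / 2 with hu
    set v : ℝ := (p / Real.cos δ + q / Real.sin δ) / 2 with hv
    have hkey1 : e1 + e2 = 2 * (Real.cos δ : ℂ) * E := by rw [he1, he2]; ring
    have hkey2 : (u : ℂ) * e1 + (v : ℂ) * e2 = x := by
      rw [he1, he2, hxE, hu, hv]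
      have hc0 : (Real.cos δ : ℂ) ≠ 0 := Complex.ofReal_ne_zero.mpr hcospos.ne'
      have hs0 : (Real.sin δ : ℂ) ≠ 0 := Complex.ofReal_ne_zero.mpr hsinpos.ne'
      have hc0' : Complex.cos (δ : ℂ) ≠ 0 := by rw [← Complex.ofReal_cos]; exact hc0
      have hs0' : Complex.sin (δ : ℂ) ≠ 0 := by rw [← Complex.ofReal_sin]; exact hs0
      push_cast
      field_simp
      ring
    -- the coefficients
    set c : ℝ := r / (2 * Real.cos δ) with hc
    have hcpos : 0 < c := div_pos hr0 (by linarith)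
    have h2c : 2 * c < 1 := by
      rw [hc]
      rw [show 2 * (r / (2 * Real.cos δ)) = r / Real.cos δ by field_simp]
      exact (div_lt_one hcospos).mpr hcosr
    set K : ℝ := 1 + |u| + |v| with hK
    have hKpos : 0 < K := by positivity
    set a : ℝ := min (c / K) ((1 - 2*c) / K) with ha
    have hapos : 0 < a := lt_min (div_pos hcpos hKpos) (div_pos (by linarith) hKpos)
    have haK1 : a * K ≤ c := by
      have h := min_le_left (c / K) ((1 - 2*c) / K)
      rw [← ha] at h
      calc a * K ≤ (c / K) * K := mul_le_mul_of_nonneg_right h hKpos.le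
        _ = c := div_mul_cancel₀ c hKpos.ne'
    have haK2 : a * K ≤ 1 - 2*c := by
      have h := min_le_right (c / K) ((1 - 2*c) / K)
      rw [← ha] at h
      calc a * K ≤ ((1 - 2*c) / K) * K := mul_le_mul_of_nonneg_right h hKpos.le
        _ = 1 - 2*c := div_mul_cancel₀ _ hKpos.ne'
    have huK : u ≤ K := le_trans (le_abs_self u) (by rw [hK]; linarith [abs_nonneg v])
    have hvK : v ≤ K := le_trans (le_abs_self v) (by rw [hK]; linarith [abs_nonneg u])
    have hu1 : 0 ≤ c - a * u := by
      nlinarith [mul_le_mul_of_nonneg_left huK hapos.le]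
    have hv1 : 0 ≤ c - a * v := by
      nlinarith [mul_le_mul_of_nonneg_left hvK hapos.le]
    have huvK : 1 - u - v ≤ K := by
      rw [hK]; linarith [neg_le_abs u, neg_le_abs v]
    have hK1 : 1 ≤ K := by rw [hK]; linarith [abs_nonneg u, abs_nonneg v]
    have ha1 : a < 1 := by nlinarith
    set b : ℝ := 1 - a with hb
    have hbpos : 0 < b := by rw [hb]; linarith
    set w1 : ℝ := (c - a * u) / b with hw1
    set w2 : ℝ := (c - a * v) / b with hw2
    set w3 : ℝ := 1 - w1 - w2 with hw3
    have hw1n : 0 ≤ w1 := div_nonneg hu1 hbpos.le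
    have hw2n : 0 ≤ w2 := div_nonneg hv1 hbpos.le
    have hsumle : (c - a * u) + (c - a * v) ≤ b := by
      rw [hb]
      nlinarith [mul_le_mul_of_nonneg_left huvK hapos.le]
    have hw3n : 0 ≤ w3 := by
      have h12 : w1 + w2 ≤ 1 := by
        rw [hw1, hw2, ← add_div]
        exact (div_le_one hbpos).mpr hsumle
      rw [hw3]; linarith
    set y : ℂ := w1 • e1 + w2 • e2 + w3 • (0 : ℂ) with hy
    have hymem : y ∈ closure D := by
      have hcc := hconv.closure
      have hs : (∑ i : Fin 3, (![w1, w2, w3] i) • (![e1, e2, 0] i)) ∈ closure D := by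
        apply hcc.sum_mem
        · intro i _
          fin_cases i
          · simpa using hw1n
          · simpa using hw2n
          · simpa using hw3n
        · rw [Fin.sum_univ_three]
          simp only [Matrix.cons_val_zero, Matrix.cons_val_one, Matrix.head_cons,
            Matrix.cons_val_two, Matrix.tail_cons]
          rw [hw3]; ring
        · intro i _
          fin_cases i
          · simpa using he1c
          · simpa using he2c
          · simpa using h0c
      rw [Fin.sum_univ_three] at hs
      simpa [hy] using hs
    have hxint : x ∈ interior D := by rwa [hopen.interior_eq]
    have hmem := hconv.combo_interior_closure_mem_interior hxint hymem hapos
      (by linarith : (0:ℝ) ≤ b) (by rw [hb]; ring)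
    rw [hopen.interior_eq] at hmem
    have hbw1 : (b : ℂ) * (w1 : ℂ) = (c : ℂ) - (a : ℂ) * (u : ℂ) := by
      have h : b * w1 = c - a * u := by rw [hw1]; field_simp
      exact_mod_cast h
    have hbw2 : (b : ℂ) * (w2 : ℂ) = (c : ℂ) - (a : ℂ) * (v : ℂ) := by
      have h : b * w2 = c - a * v := by rw [hw2]; field_simp
      exact_mod_cast h
    have hcr : (c : ℂ) * (2 * (Real.cos δ : ℂ)) = (r : ℂ) := by
      have h : c * (2 * Real.cos δ) = r := by
        rw [hc, div_mul_cancel₀ r (by positivity : (2 * Real.cos δ) ≠ 0)]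
      exact_mod_cast h
    have heq : a • x + b • y = (r : ℂ) * E := by
      rw [hy]
      simp only [Complex.real_smul]
      calc (a : ℂ) * x + (b : ℂ) * ((w1 : ℂ) * e1 + (w2 : ℂ) * e2 + (w3 : ℂ) * 0)
          = (a : ℂ) * x + ((b : ℂ) * (w1 : ℂ)) * e1 + ((b : ℂ) * (w2 : ℂ)) * e2 := by ring
        _ = (a : ℂ) * x + ((c : ℂ) - (a : ℂ) * (u : ℂ)) * e1
              + ((c : ℂ) - (a : ℂ) * (v : ℂ)) * e2 := by rw [hbw1, hbw2]
        _ = (a : ℂ) * x - (a : ℂ) * ((u : ℂ) * e1 + (v : ℂ) * e2)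
              + (c : ℂ) * (e1 + e2) := by ring
        _ = (a : ℂ) * x - (a : ℂ) * x + (c : ℂ) * (2 * (Real.cos δ : ℂ) * E) := by
              rw [hkey2, hkey1]
        _ = ((c : ℂ) * (2 * (Real.cos δ : ℂ))) * E := by ring
        _ = (r : ℂ) * E := by rw [hcr]
    rw [heq] at hmem
    exact hmem
end
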